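/- arXiv:2401.10206 — 8 statements merged into one kernel-verified Lean document; each statement's English description precedes it below -/
import Mathlib

section
/- Let X be a compact metric space and Y ⊆ X a totally disconnected subset. For y ∈ Y, let 𝒰_y be the collection of open sets U ⊆ X with y ∈ U and frontier(U) ∩ Y = ∅, and let F(y) = ⋂_{U ∈ 𝒰_y} closure(U). Then F(y) ∩ Y = {y}. -/
open Set Topology

/-- `C` is a relatively clopen subset of `Y` (clopen in the subspace `Y`). -/
def RelClopen {α : Type*} [TopologicalSpace α] (Y C : Set α) : Prop :=
  (∃ U : Set α, IsOpen U ∧ C = U ∩ Y) ∧ (∃ F : Set α, IsClosed F ∧ C = F ∩ Y)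

/-- `Y` is totally disconnected: any two points of `Y` lie in disjoint relatively
clopen subsets of `Y`. -/
def TotDisconnIn {α : Type*} [TopologicalSpace α] (Y : Set α) : Prop :=
  ∀ a ∈ Y, ∀ b ∈ Y, a ≠ b → ∃ C : Set α, RelClopen Y C ∧ a ∈ C ∧ b ∉ C

/-- `F(y)`: the intersection of closures of all open sets `U ∋ y` whose
frontier misses `Y`. -/
def Fset {α : Type*} [TopologicalSpace α] (Y : Set α) (y : α) : Set α :=
  ⋂₀ {T | ∃ U : Set α, IsOpen U ∧ y ∈ U ∧ frontier U ∩ Y = ∅ ∧ T = closure U}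

theorem stmt0 {X : Type*} [MetricSpace X] [CompactSpace X] (Y : Set X)
    (hTD : TotDisconnIn Y) (y : X) (hy : y ∈ Y) :
    Fset Y y ∩ Y = {y} := by
  ext z
  simp only [mem_inter_iff, mem_singleton_iff]
  constructor
  · rintro ⟨hz, hzY⟩
    by_contra hne
    obtain ⟨C, ⟨⟨U, hU, hCU⟩, ⟨F, hF, hCF⟩⟩, hyC, hzC⟩ :=
      hTD y hy z hzY (fun h => hne h.symm)
    -- C and Y \ C are separated sets
    have hCcl : closure C ⊆ F := hF.closure_subset_iff.2 (by rw [hCF]; exact inter_subset_left)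
    have hYCU : Y \ C ⊆ Uᶜ := by
      intro x ⟨hxY, hxC⟩ hxU
      exact hxC (by rw [hCU]; exact ⟨hxU, hxY⟩)
    have hYCcl : closure (Y \ C) ⊆ Uᶜ := hU.isClosed_compl.closure_subset_iff.2 hYCU
    have hCne : C.Nonempty := ⟨y, hyC⟩
    have hBne : (Y \ C).Nonempty := ⟨z, hzY, hzC⟩
    have hdisjAB : ∀ x ∈ C, x ∉ closure (Y \ C) :=
      fun x hx h2 => hYCcl h2 (by rw [hCU] at hx; exact hx.1)
    have hdisjBA : ∀ x ∈ Y \ C, x ∉ closure C :=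
      fun x hx h2 => hx.2 (by rw [hCF]; exact ⟨hCcl h2, hx.1⟩)
    set V : Set X := {x | Metric.infDist x C < Metric.infDist x (Y \ C)} with hV
    set W : Set X := {x | Metric.infDist x (Y \ C) < Metric.infDist x C} with hW
    have hVo : IsOpen V := isOpen_lt (Metric.continuous_infDist_pt C)
      (Metric.continuous_infDist_pt (Y \ C))
    have hWo : IsOpen W := isOpen_lt (Metric.continuous_infDist_pt (Y \ C))
      (Metric.continuous_infDist_pt C)
    have hCV : C ⊆ V := by
      intro x hx
      have h1 : Metric.infDist x C = 0 := Metric.infDist_zero_of_mem hx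
      have h2 : 0 < Metric.infDist x (Y \ C) := by
        rw [← Metric.infDist_closure]
        exact (isClosed_closure.notMem_iff_infDist_pos hBne.closure).1 (hdisjAB x hx)
      simpa [hV, h1] using h2
    have hYCW : Y \ C ⊆ W := by
      intro x hx
      have h1 : Metric.infDist x (Y \ C) = 0 := Metric.infDist_zero_of_mem hx
      have h2 : 0 < Metric.infDist x C := by
        rw [← Metric.infDist_closure]
        exact (isClosed_closure.notMem_iff_infDist_pos hCne.closure).1 (hdisjBA x hx)
      simpa [hW, h1] using h2
    have hdisj : Disjoint V W := by
      rw [Set.disjoint_left]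
      intro x hx hx2
      exact absurd hx (by simpa [hV] using le_of_lt hx2)
    have hclVW : closure V ⊆ Wᶜ :=
      hWo.isClosed_compl.closure_subset_iff.2 hdisj.subset_compl_right
    -- frontier V ∩ Y = ∅
    have hfr : frontier V ∩ Y = ∅ := by
      ext x
      simp only [mem_inter_iff, mem_empty_iff_false, iff_false, not_and]
      rw [hVo.frontier_eq]
      intro hxf hxY
      rcases em (x ∈ C) with hxC | hxC
      · exact hxf.2 (hCV hxC)
      · exact hclVW hxf.1 (hYCW ⟨hxY, hxC⟩)
    have hzclV : z ∈ closure V := hz _ ⟨V, hVo, hCV hyC, hfr, rfl⟩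
    exact hclVW hzclV (hYCW ⟨hzY, hzC⟩)
  · rintro rfl
    refine ⟨?_, hy⟩
    rintro T ⟨U, hU, hyU, -, rfl⟩
    exact subset_closure hyU
end

section
/- Let X be a compact metric space, Y ⊆ X, and y ∈ Y. Define 𝒰_y as the collection of open sets U ⊆ X with y ∈ U and frontier(U) ∩ Y = ∅, and F(y) = ⋂_{U ∈ 𝒰_y} closure(U). Then F(y) is connected. -/
open Set Topology

theorem stmt1 {X : Type*} [MetricSpace X] [CompactSpace X] (Y : Set X)
    (y : X) (hy : y ∈ Y) :
    IsConnected (Fset Y y) := by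
  classical
  -- the "good" open sets
  set P : Set X → Prop := fun U => IsOpen U ∧ y ∈ U ∧ frontier U ∩ Y = ∅ with hP
  have hPinter : ∀ U V : Set X, P U → P V → P (U ∩ V) := by
    rintro U V ⟨hU, hyU, hfU⟩ ⟨hV, hyV, hfV⟩
    refine ⟨hU.inter hV, ⟨hyU, hyV⟩, ?_⟩
    rw [eq_empty_iff_forall_notMem] at hfU hfV ⊢
    intro x ⟨hxf, hxY⟩
    rcases frontier_inter_subset U V hxf with h | h
    · exact hfU x ⟨h.1, hxY⟩
    · exact hfV x ⟨h.2, hxY⟩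
  have hPuniv : P univ := ⟨isOpen_univ, mem_univ y, by simp⟩
  set ι := {W : Set X // P W} with hι
  haveI : Nonempty ι := ⟨⟨univ, hPuniv⟩⟩
  have hFi : Fset Y y = ⋂ i : ι, closure i.1 := by
    ext x
    simp only [Fset, mem_sInter, mem_setOf_eq, mem_iInter]
    constructor
    · intro h i
      exact h _ ⟨i.1, i.2.1, i.2.2.1, i.2.2.2, rfl⟩
    · rintro h T ⟨U, h1, h2, h3, rfl⟩
      exact h ⟨U, h1, h2, h3⟩
  have hFcl : IsClosed (Fset Y y) := by
    rw [hFi]; exact isClosed_iInter fun i => isClosed_closure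
  have hyF : y ∈ Fset Y y := by
    rw [hFi]; exact mem_iInter.2 fun i => subset_closure i.2.2.1
  refine ⟨⟨y, hyF⟩, ?_⟩
  rw [isPreconnected_iff_subset_of_fully_disjoint_closed hFcl]
  have key : ∀ u v : Set X, IsClosed u → IsClosed v → Fset Y y ⊆ u ∪ v →
      Disjoint u v → y ∈ u → Fset Y y ⊆ u := by
    intro u v hu hv hsub hdisj hyu
    obtain ⟨U, V, hUo, hVo, hAU, hBV, hUV⟩ :=
      NormalSpace.normal (Fset Y y ∩ u) (Fset Y y ∩ v) (hFcl.inter hu) (hFcl.inter hv)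
        (hdisj.mono inter_subset_right inter_subset_right)
    have hFUV : Fset Y y ⊆ U ∪ V := fun x hx =>
      (hsub hx).elim (fun h => Or.inl (hAU ⟨hx, h⟩)) (fun h => Or.inr (hBV ⟨hx, h⟩))
    have hclUV : closure U ∩ V = ∅ := by
      have : closure U ⊆ Vᶜ :=
        closure_minimal hUV.subset_compl_right hVo.isClosed_compl
      rw [eq_empty_iff_forall_notMem]
      exact fun x ⟨h1, h2⟩ => this h1 h2
    -- find a good open set W with closure W ⊆ U ∪ V
    have hex : ∃ i : ι, closure i.1 ⊆ U ∪ V := by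
      by_contra hcon
      push_neg at hcon
      have hne : ∀ i : ι, (closure i.1 \ (U ∪ V)).Nonempty := fun i => by
        rcases not_subset.1 (hcon i) with ⟨x, hx1, hx2⟩
        exact ⟨x, hx1, hx2⟩
      have hdir : Directed (· ⊇ ·) (fun i : ι => closure i.1 \ (U ∪ V)) := by
        intro i j
        refine ⟨⟨i.1 ∩ j.1, hPinter _ _ i.2 j.2⟩, ?_, ?_⟩
        · exact diff_subset_diff_left (closure_mono inter_subset_left)
        · exact diff_subset_diff_left (closure_mono inter_subset_right)
      have hclosed : ∀ i : ι, IsClosed (closure i.1 \ (U ∪ V)) := fun i =>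
        isClosed_closure.sdiff (hUo.union hVo)
      obtain ⟨x, hx⟩ :=
        IsCompact.nonempty_iInter_of_directed_nonempty_isCompact_isClosed
          (fun i : ι => closure i.1 \ (U ∪ V)) hdir hne
          (fun i => (hclosed i).isCompact) hclosed
      simp only [mem_iInter, mem_diff] at hx
      have hxF : x ∈ Fset Y y := by
        rw [hFi]; exact mem_iInter.2 fun i => (hx i).1
      exact (hx ⟨univ, hPuniv⟩).2 (hFUV hxF)
    obtain ⟨W, hWsub⟩ := hex
    -- W ∩ U is a good open set
    have hyU : y ∈ U := hAU ⟨hyF, hyu⟩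
    have hW'P : P (W.1 ∩ U) := by
      refine ⟨W.2.1.inter hUo, ⟨W.2.2.1, hyU⟩, ?_⟩
      rw [eq_empty_iff_forall_notMem]
      intro x ⟨hxf, hxY⟩
      rcases frontier_inter_subset W.1 U hxf with h | h
      · have := W.2.2.2
        rw [eq_empty_iff_forall_notMem] at this
        exact this x ⟨h.1, hxY⟩
      · have hxU : x ∉ U := by
          rw [hUo.frontier_eq] at h
          exact h.2.2
        rcases hWsub h.1 with h' | h'
        · exact hxU h'
        · have hxclU : x ∈ closure U := by
            rw [hUo.frontier_eq] at h
            exact h.2.1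
          rw [eq_empty_iff_forall_notMem] at hclUV
          exact hclUV x ⟨hxclU, h'⟩
    have hFclU : Fset Y y ⊆ closure U := by
      have h1 : Fset Y y ⊆ closure (W.1 ∩ U) := by
        rw [hFi]; exact iInter_subset _ (⟨W.1 ∩ U, hW'P⟩ : ι)
      exact h1.trans (closure_mono inter_subset_right)
    intro x hxF
    rcases hsub hxF with h | h
    · exact h
    · exfalso
      have hxV : x ∈ V := hBV ⟨hxF, h⟩
      rw [eq_empty_iff_forall_notMem] at hclUV
      exact hclUV x ⟨hFclU hxF, hxV⟩
  intro u v hu hv hsub hdisj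
  rcases hsub hyF with h | h
  · exact Or.inl (key u v hu hv hsub hdisj h)
  · exact Or.inr (key v u hv hu (by rwa [union_comm]) hdisj.symm h)
end

section
/- Let X be a compact metric space, Y ⊆ X totally disconnected, and y ∈ Y. Define F(y) = ⋂ {closure(U) : U open in X, y ∈ U, frontier(U) ∩ Y = ∅}. If F(y) = {y}, then Y is zero-dimensional at y, i.e., y has a neighborhood basis (in Y) of relatively clopen subsets of Y. -/
open Set Topology

/-- `Y` is zero-dimensional at `y`: every relatively open neighborhood of `y` in `Y`
contains a relatively clopen neighborhood of `y`. -/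
def ZeroDimAt {α : Type*} [TopologicalSpace α] (Y : Set α) (y : α) : Prop :=
  ∀ V : Set α, IsOpen V → y ∈ V → ∃ C : Set α, RelClopen Y C ∧ y ∈ C ∧ C ⊆ V

theorem stmt2 {X : Type*} [MetricSpace X] [CompactSpace X] (Y : Set X)
    (hTD : TotDisconnIn Y) (y : X) (hy : y ∈ Y)
    (hF : Fset Y y = {y}) :
    ZeroDimAt Y y := by
  intro V hV hyV
  have hFi : (⋂ i : {U : Set X // IsOpen U ∧ y ∈ U ∧ frontier U ∩ Y = ∅},
      closure i.1) = {y} := by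
    rw [← hF]
    ext x
    simp only [Fset, mem_sInter, mem_iInter, mem_setOf_eq]
    constructor
    · rintro h T ⟨U, hU, hyU, hfr, rfl⟩; exact h ⟨U, hU, hyU, hfr⟩
    · rintro h ⟨U, hU, hyU, hfr⟩; exact h _ ⟨U, hU, hyU, hfr, rfl⟩
  have hcov : Vᶜ ⊆ ⋃ i : {U : Set X // IsOpen U ∧ y ∈ U ∧ frontier U ∩ Y = ∅},
      (closure i.1)ᶜ := by
    intro x hx
    simp only [mem_iUnion, mem_compl_iff]
    by_contra hc
    push_neg at hc
    have hxm : x ∈ ⋂ i : {U : Set X // IsOpen U ∧ y ∈ U ∧ frontier U ∩ Y = ∅},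
        closure i.1 := mem_iInter.2 hc
    rw [hFi] at hxm
    rw [mem_singleton_iff] at hxm
    exact hx (hxm ▸ hyV)
  have hcomp : IsCompact (Vᶜ) := hV.isClosed_compl.isCompact
  obtain ⟨s, hs⟩ := hcomp.elim_finite_subcover _
    (fun i => isClosed_closure.isOpen_compl) hcov
  set U : Set X := ⋂ i ∈ s, i.1 with hUdef
  have hUopen : IsOpen U := isOpen_biInter_finset (fun i _ => i.2.1)
  have hyU : y ∈ U := mem_iInter₂.2 fun i _ => i.2.2.1
  have hclU : closure U ⊆ V := by
    intro x hx
    by_contra hxV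
    have hxs := hs hxV
    simp only [mem_iUnion, mem_compl_iff] at hxs
    obtain ⟨i, hi, hxi⟩ := hxs
    exact hxi (closure_mono (biInter_subset_of_mem hi) hx)
  have hfrU : frontier U ⊆ closure U \ U := by
    rw [hUopen.frontier_eq]
  have hfr : frontier U ∩ Y = ∅ := by
    ext x
    simp only [mem_inter_iff, mem_empty_iff_false, iff_false, not_and]
    intro hxf hxY
    obtain ⟨hxcl, hxnU⟩ := hfrU hxf
    rw [hUdef, mem_iInter₂] at hxnU
    push_neg at hxnU
    obtain ⟨i, hi, hxi⟩ := hxnU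
    have hxcli : x ∈ closure i.1 := closure_mono (biInter_subset_of_mem hi) hxcl
    have : x ∈ frontier i.1 := by
      rw [i.2.1.frontier_eq]; exact ⟨hxcli, hxi⟩
    have := mem_inter this hxY
    rw [i.2.2.2] at this
    exact this
  refine ⟨U ∩ Y, ⟨⟨U, hUopen, rfl⟩, ⟨closure U, isClosed_closure, ?_⟩⟩,
    ⟨hyU, hy⟩, fun x hx => hclU (subset_closure hx.1)⟩
  ext x
  simp only [mem_inter_iff]
  constructor
  · rintro ⟨h1, h2⟩; exact ⟨subset_closure h1, h2⟩
  · rintro ⟨h1, h2⟩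
    by_contra hc
    push_neg at hc
    have hxf : x ∈ frontier U := by rw [hUopen.frontier_eq]; exact ⟨h1, fun h => hc h h2⟩
    have := mem_inter hxf h2
    rw [hfr] at this
    exact this
end

section
/- Let X be a compact metric space, Y ⊆ X totally disconnected, and y ∈ Y. Define F(y) = ⋂ {closure(U) : U open in X, y ∈ U, frontier(U) ∩ Y = ∅}. If Y is not zero-dimensional at y, then F(y) is a nondegenerate subcontinuum of X (compact, connected, with more than one point) and F(y) ∩ Y = {y}. -/
open Set Topology

section Aux

variable {X : Type*} [TopologicalSpace X] (Y : Set X) (y : X)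

/-- the family of "admissible" open sets -/
def Adm : Set (Set X) := {U | IsOpen U ∧ y ∈ U ∧ frontier U ∩ Y = ∅}

lemma Fset_eq : Fset Y y = ⋂ U ∈ Adm Y y, closure U := by
  ext x
  simp only [Fset, mem_sInter, mem_setOf_eq, mem_iInter, Adm]
  constructor
  · intro h U hU
    exact h _ ⟨U, hU.1, hU.2.1, hU.2.2, rfl⟩
  · rintro h T ⟨U, h1, h2, h3, rfl⟩
    exact h U ⟨h1, h2, h3⟩

lemma univ_mem_Adm : (univ : Set X) ∈ Adm Y y :=
  ⟨isOpen_univ, mem_univ y, by simp⟩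

lemma inter_mem_Adm {U V : Set X} (hU : U ∈ Adm Y y) (hV : V ∈ Adm Y y) :
    U ∩ V ∈ Adm Y y := by
  refine ⟨hU.1.inter hV.1, ⟨hU.2.1, hV.2.1⟩, ?_⟩
  have h := frontier_inter_subset U V
  rw [eq_empty_iff_forall_notMem]
  intro x ⟨hx, hxY⟩
  have e1 := hU.2.2
  have e2 := hV.2.2
  rw [eq_empty_iff_forall_notMem] at e1 e2
  rcases h hx with h' | h'
  · exact e1 x ⟨h'.1, hxY⟩
  · exact e2 x ⟨h'.2, hxY⟩

lemma mem_Fset_self : y ∈ Fset Y y := by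
  rw [Fset_eq]
  exact mem_iInter₂.2 fun U hU => subset_closure hU.2.1

lemma Fset_closed : IsClosed (Fset Y y) := by
  rw [Fset_eq]
  exact isClosed_biInter fun U _ => isClosed_closure

end Aux

section Main

variable {X : Type*} [MetricSpace X] [CompactSpace X] (Y : Set X) (y : X)

omit [CompactSpace X] in
lemma biInter_mem_Adm (s : Finset (Adm Y y)) :
    (univ ∩ ⋂ i ∈ s, (i : Set X)) ∈ Adm Y y := by
  classical
  induction s using Finset.induction_on with
  | empty => simpa using univ_mem_Adm Y y
  | insert _ _ ha ih =>
    rename_i a t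
    simp only [Finset.mem_insert, iInter_iInter_eq_or_left]
    rw [show (univ ∩ ((a : Set X) ∩ ⋂ i ∈ t, (i : Set X))) =
      (a : Set X) ∩ (univ ∩ ⋂ i ∈ t, (i : Set X)) by rw [inter_left_comm]]
    exact inter_mem_Adm Y y a.2 ih

/-- compact exhaustion: if Fset ⊆ O open, some admissible U has closure U ⊆ O. -/
lemma exists_adm_subset {O : Set X} (hO : IsOpen O) (hFO : Fset Y y ⊆ O) :
    ∃ U ∈ Adm Y y, closure U ⊆ O := by
  have hcpt : IsCompact Oᶜ := hO.isClosed_compl.isCompact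
  have hempty : (Oᶜ ∩ ⋂ U : Adm Y y, closure (U : Set X)) = ∅ := by
    rw [eq_empty_iff_forall_notMem]
    rintro x ⟨hxO, hx⟩
    apply hxO
    apply hFO
    rw [Fset_eq]
    rw [mem_iInter] at hx
    exact mem_iInter₂.2 fun U hU => hx ⟨U, hU⟩
  obtain ⟨s, hs⟩ := hcpt.elim_finite_subfamily_closed (fun U : Adm Y y => closure (U : Set X))
    (fun _ => isClosed_closure) hempty
  -- take U = intersection of members of s, together with univ
  refine ⟨univ ∩ ⋂ i ∈ s, (i : Set X), ?_, ?_⟩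
  · exact biInter_mem_Adm Y y s
  · intro x hx
    by_contra hxO
    have : x ∈ Oᶜ ∩ ⋂ i ∈ s, closure ((i : Adm Y y) : Set X) := by
      refine ⟨hxO, mem_iInter₂.2 fun i hi => ?_⟩
      have : (univ ∩ ⋂ j ∈ s, (j : Set X)) ⊆ (i : Set X) := by
        intro z hz
        exact mem_iInter₂.1 hz.2 i hi
      exact closure_mono this hx
    rw [hs] at this
    exact this

omit [CompactSpace X] in
/-- Separated sets in a metric space have disjoint open neighborhoods. -/
lemma sep_nhds_of_separated {C D : Set X} (hC : C.Nonempty) (hD : D.Nonempty)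
    (h1 : Disjoint (closure C) D) (h2 : Disjoint C (closure D)) :
    ∃ V₁ V₂ : Set X, IsOpen V₁ ∧ IsOpen V₂ ∧ C ⊆ V₁ ∧ D ⊆ V₂ ∧ Disjoint V₁ V₂ := by
  refine ⟨{x | Metric.infDist x C < Metric.infDist x D},
    {x | Metric.infDist x D < Metric.infDist x C},
    isOpen_lt (Metric.continuous_infDist_pt C) (Metric.continuous_infDist_pt D),
    isOpen_lt (Metric.continuous_infDist_pt D) (Metric.continuous_infDist_pt C),
    ?_, ?_, ?_⟩
  · intro c hc
    have hzero : Metric.infDist c C = 0 := Metric.infDist_zero_of_mem hc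
    have hne : c ∉ closure D := disjoint_left.1 h2 hc
    have hpos : 0 < Metric.infDist c (closure D) :=
      (isClosed_closure.notMem_iff_infDist_pos hD.closure).1 hne
    rw [Metric.infDist_closure] at hpos
    simpa [hzero] using hpos
  · intro d hd
    have hzero : Metric.infDist d D = 0 := Metric.infDist_zero_of_mem hd
    have hne : d ∉ closure C := disjoint_right.1 h1 hd
    have hpos : 0 < Metric.infDist d (closure C) :=
      (isClosed_closure.notMem_iff_infDist_pos hC.closure).1 hne
    rw [Metric.infDist_closure] at hpos
    simpa [hzero] using hpos
  · rw [disjoint_left]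
    intro x hx hx'
    simp only [mem_setOf_eq] at hx hx'
    exact lt_asymm hx hx'

/-- If Fset ⊆ V₁ ∪ V₂, disjoint open, y ∈ V₁, then Fset ⊆ closure V₁ and misses V₂. -/
lemma Fset_subset_closure_left {V₁ V₂ : Set X} (h1 : IsOpen V₁) (h2 : IsOpen V₂)
    (hd : Disjoint V₁ V₂) (hsub : Fset Y y ⊆ V₁ ∪ V₂) (hy1 : y ∈ V₁) :
    Fset Y y ∩ V₂ = ∅ := by
  obtain ⟨U, hU, hUsub⟩ := exists_adm_subset Y y (h1.union h2) hsub
  have hclV1V2 : closure V₁ ∩ V₂ = ∅ := by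
    rw [eq_empty_iff_forall_notMem]
    rintro x ⟨hx1, hx2⟩
    have : V₁ ⊆ V₂ᶜ := fun z hz => disjoint_left.1 hd hz
    have : closure V₁ ⊆ V₂ᶜ := closure_minimal this (h2.isClosed_compl)
    exact this hx1 hx2
  have hW : U ∩ V₁ ∈ Adm Y y := by
    refine ⟨hU.1.inter h1, ⟨hU.2.1, hy1⟩, ?_⟩
    rw [eq_empty_iff_forall_notMem]
    rintro x ⟨hxf, hxY⟩
    have e1 := hU.2.2
    rw [eq_empty_iff_forall_notMem] at e1
    rcases frontier_inter_subset U V₁ hxf with h' | h'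
    · exact e1 x ⟨h'.1, hxY⟩
    · have hx12 : x ∈ V₁ ∪ V₂ := hUsub h'.1
      rcases hx12 with h'' | h''
      · exact h'.2.2 (by rw [h1.interior_eq]; exact h'')
      · rw [eq_empty_iff_forall_notMem] at hclV1V2
        exact hclV1V2 x ⟨h'.2.1, h''⟩
  have : Fset Y y ⊆ closure (U ∩ V₁) := by
    rw [Fset_eq]; exact fun x hx => mem_iInter₂.1 hx _ hW
  have hsub2 : Fset Y y ⊆ closure V₁ := this.trans (closure_mono inter_subset_right)
  rw [eq_empty_iff_forall_notMem]
  rintro x ⟨hxF, hxV2⟩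
  rw [eq_empty_iff_forall_notMem] at hclV1V2
  exact hclV1V2 x ⟨hsub2 hxF, hxV2⟩

end Main

theorem stmt3 {X : Type*} [MetricSpace X] [CompactSpace X] (Y : Set X)
    (hTD : TotDisconnIn Y) (y : X) (hy : y ∈ Y)
    (hnz : ¬ ZeroDimAt Y y) :
    IsCompact (Fset Y y) ∧ IsConnected (Fset Y y) ∧ (Fset Y y).Nontrivial ∧
      Fset Y y ∩ Y = {y} := by
  have hclosed := Fset_closed Y y
  have hcpt : IsCompact (Fset Y y) := hclosed.isCompact
  have hyF : y ∈ Fset Y y := mem_Fset_self Y y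
  -- preconnected
  have hpre : IsPreconnected (Fset Y y) := by
    rw [isPreconnected_closed_iff]
    intro t t' ht ht' hcover hne hne'
    by_contra hdisj
    rw [not_nonempty_iff_eq_empty] at hdisj
    set A := Fset Y y ∩ t with hA
    set B := Fset Y y ∩ t' with hB
    have hABd : Disjoint A B := by
      rw [disjoint_left]
      rintro x ⟨hx1, hx2⟩ ⟨hx3, hx4⟩
      rw [eq_empty_iff_forall_notMem] at hdisj
      exact hdisj x ⟨hx1, hx2, hx4⟩
    have hAcl : IsClosed A := hclosed.inter ht
    have hBcl : IsClosed B := hclosed.inter ht'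
    obtain ⟨V₁, V₂, hV1, hV2, hAV, hBV, hVd⟩ := normal_separation hAcl hBcl hABd
    have hFsub : Fset Y y ⊆ V₁ ∪ V₂ := by
      intro x hx
      rcases hcover hx with h | h
      · exact Or.inl (hAV ⟨hx, h⟩)
      · exact Or.inr (hBV ⟨hx, h⟩)
    rcases hcover hyF with hyt | hyt'
    · have := Fset_subset_closure_left Y y hV1 hV2 hVd hFsub (hAV ⟨hyF, hyt⟩)
      obtain ⟨b, hb⟩ := hne'
      rw [eq_empty_iff_forall_notMem] at this
      exact this b ⟨hb.1, hBV ⟨hb.1, hb.2⟩⟩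
    · have := Fset_subset_closure_left Y y hV2 hV1 hVd.symm
        (by rw [union_comm]; exact hFsub) (hBV ⟨hyF, hyt'⟩)
      obtain ⟨a, ha⟩ := hne
      rw [eq_empty_iff_forall_notMem] at this
      exact this a ⟨ha.1, hAV ⟨ha.1, ha.2⟩⟩
  -- nontrivial
  have hnt : (Fset Y y).Nontrivial := by
    by_contra hns
    apply hnz
    intro V hV hyV
    have hFy : Fset Y y = {y} := by
      rw [not_nontrivial_iff] at hns
      apply Subset.antisymm
      · intro x hx; exact hns hx hyF
      · intro x hx; rw [mem_singleton_iff] at hx; subst hx; exact hyF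
    obtain ⟨U, hU, hUV⟩ := exists_adm_subset Y y hV (by rw [hFy]; simpa)
    refine ⟨U ∩ Y, ⟨⟨U, hU.1, rfl⟩, ⟨closure U, isClosed_closure, ?_⟩⟩,
      ⟨hU.2.1, hy⟩, fun x hx => hUV (subset_closure hx.1)⟩
    -- U ∩ Y = closure U ∩ Y
    apply Subset.antisymm
    · exact inter_subset_inter_left Y subset_closure
    · rintro x ⟨hxc, hxY⟩
      refine ⟨?_, hxY⟩
      by_contra hxU
      have hfr : x ∈ frontier U := ⟨hxc, by rwa [hU.1.interior_eq]⟩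
      have e1 := hU.2.2
      rw [eq_empty_iff_forall_notMem] at e1
      exact e1 x ⟨hfr, hxY⟩
  -- Fset ∩ Y = {y}
  have hFY : Fset Y y ∩ Y = {y} := by
    apply Subset.antisymm
    · rintro z ⟨hzF, hzY⟩
      rw [mem_singleton_iff]
      by_contra hne
      obtain ⟨C, ⟨⟨Uo, hUo, hCU⟩, ⟨Fc, hFc, hCF⟩⟩, hyC, hzC⟩ := hTD y hy z hzY (Ne.symm hne)
      -- C and Y \ C are separated
      have hsep1 : Disjoint (closure C) (Y \ C) := by
        rw [disjoint_left]
        rintro x hx ⟨hxY, hxC⟩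
        have : x ∈ Fc := by rw [hCF] at hx; exact (closure_minimal inter_subset_left hFc) hx
        exact hxC (by rw [hCF]; exact ⟨this, hxY⟩)
      have hsep2 : Disjoint C (closure (Y \ C)) := by
        rw [disjoint_left]
        intro x hx hx'
        have hYCsub : Y \ C ⊆ Uoᶜ := by
          rintro w ⟨hwY, hwC⟩ hwU
          exact hwC (by rw [hCU]; exact ⟨hwU, hwY⟩)
        have : x ∈ Uoᶜ := closure_minimal hYCsub hUo.isClosed_compl hx'
        exact this (by rw [hCU] at hx; exact hx.1)
      obtain ⟨V₁, V₂, hV1, hV2, hCV, hYCV, hVd⟩ :=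
        sep_nhds_of_separated (C := C) (D := Y \ C) ⟨y, hyC⟩ ⟨z, ⟨hzY, hzC⟩⟩ hsep1 hsep2
      have hclV1V2 : closure V₁ ∩ V₂ = ∅ := by
        rw [eq_empty_iff_forall_notMem]
        rintro x ⟨hx1, hx2⟩
        have hs : V₁ ⊆ V₂ᶜ := fun w hw => disjoint_left.1 hVd hw
        exact (closure_minimal hs hV2.isClosed_compl) hx1 hx2
      have hV1adm : V₁ ∈ Adm Y y := by
        refine ⟨hV1, hCV hyC, ?_⟩
        rw [eq_empty_iff_forall_notMem]
        rintro x ⟨hxf, hxY⟩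
        by_cases hxC : x ∈ C
        · exact hxf.2 (by rw [hV1.interior_eq]; exact hCV hxC)
        · rw [eq_empty_iff_forall_notMem] at hclV1V2
          exact hclV1V2 x ⟨hxf.1, hYCV ⟨hxY, hxC⟩⟩
      have hzV2 : z ∈ V₂ := hYCV ⟨hzY, hzC⟩
      have : z ∈ closure V₁ := by
        rw [Fset_eq] at hzF
        exact mem_iInter₂.1 hzF V₁ hV1adm
      rw [eq_empty_iff_forall_notMem] at hclV1V2
      exact hclV1V2 z ⟨this, hzV2⟩
    · intro x hx
      rw [mem_singleton_iff] at hx; subst hx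
      exact ⟨hyF, hy⟩
  exact ⟨hcpt, ⟨⟨y, hyF⟩, hpre⟩, hnt, hFY⟩
end

section
/- Let S be the unit circle in the complex plane ℂ, with the four points 1, i, −1, −i on it. Let A₁, A₂, A₃, A₄ be pairwise disjoint arcs (homeomorphic images of [0,1]) such that each Aⱼ meets S only in one endpoint aⱼ (a₁ = 1, a₂ = i, a₃ = −1, a₄ = −i), and the other endpoint bⱼ of Aⱼ lies in the open unit disk. Let K ⊆ ℂ \ (A₂ ∪ S ∪ A₄) be a compact connected set containing b₁ and b₃. Then b₂ and b₄ lie in different connected components of ℂ \ (A₁ ∪ S ∪ A₃ ∪ K). -/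
open Set Topology unitInterval

/-- `A` is an arc from `p` to `q`: a homeomorphic image of `[0,1]`
(equivalently, by compactness, the image of a continuous injection). -/
def IsArcFromTo {α : Type*} [TopologicalSpace α] (A : Set α) (p q : α) : Prop :=
  ∃ f : unitInterval → α, Continuous f ∧ Function.Injective f ∧
    Set.range f = A ∧ f 0 = p ∧ f 1 = q

open scoped Real

section Helpers
open Complex

lemma exists_log_on_convex {C : Set ℂ} (hconv : Convex ℝ C) (hcomp : IsCompact C)
    {c₀ : ℂ} (hc₀ : c₀ ∈ C) {Φ : ℂ → ℂ} (hΦ : ContinuousOn Φ C)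
    (hne : ∀ z ∈ C, Φ z ≠ 0) :
    ∃ g : ℂ → ℂ, ContinuousOn g C ∧ ∀ z ∈ C, Complex.exp (g z) = Φ z := by
  obtain ⟨z₀, hz₀C, hz₀min⟩ := hcomp.exists_isMinOn ⟨c₀, hc₀⟩ hΦ.norm
  set m : ℝ := ‖Φ z₀‖ with hm_def
  have hm : 0 < m := norm_pos_iff.2 (hne z₀ hz₀C)
  have hmle : ∀ z ∈ C, m ≤ ‖Φ z‖ := fun z hz => hz₀min hz
  have huc := hcomp.uniformContinuousOn_of_continuous hΦ
  rw [Metric.uniformContinuousOn_iff] at huc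
  obtain ⟨δ, hδ, hδ'⟩ := huc m hm
  obtain ⟨R, hR⟩ := hcomp.isBounded.subset_closedBall c₀
  have hR0 : 0 ≤ R := by
    have := hR hc₀; simpa using this
  obtain ⟨n, hn⟩ := exists_nat_gt (R / δ)
  have hnpos : 0 < (n : ℝ) := lt_of_le_of_lt (div_nonneg hR0 hδ.le) hn
  have hnR : R < n * δ := by
    rw [div_lt_iff₀ hδ] at hn; linarith
  set pt : ℂ → ℕ → ℂ := fun x k => c₀ + (((k : ℝ)/n) : ℝ) • (x - c₀) with hpt_def
  have hptC : ∀ x ∈ C, ∀ k : ℕ, k ≤ n → pt x k ∈ C := by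
    intro x hx k hk
    have h0 : (0:ℝ) ≤ (k:ℝ)/n := by positivity
    have h1 : (k:ℝ)/n ≤ 1 := by
      rw [div_le_one hnpos]; exact_mod_cast hk
    have : pt x k = (1 - (k:ℝ)/n) • c₀ + ((k:ℝ)/n) • x := by
      simp only [hpt_def, smul_sub, sub_smul, one_smul]
      abel
    rw [this]
    exact hconv hc₀ hx (by linarith) h0 (by ring)
  have hdist : ∀ x ∈ C, ∀ k : ℕ, dist (pt x (k+1)) (pt x k) < δ := by
    intro x hx k
    have hsub : pt x (k+1) - pt x k = ((((k:ℝ)+1)/n - (k:ℝ)/n) : ℝ) • (x - c₀) := by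
      simp only [hpt_def]
      rw [add_sub_add_left_eq_sub, ← sub_smul]
      push_cast
      ring_nf
    have hcoef : ((k:ℝ)+1)/n - (k:ℝ)/n = 1/n := by
      field_simp
      ring
    rw [dist_eq_norm, hsub, hcoef, norm_smul]
    have hxc : ‖x - c₀‖ ≤ R := by
      have := hR hx; rwa [Metric.mem_closedBall, dist_eq_norm] at this
    have h1n : ‖(1:ℝ)/n‖ = 1/n := by
      rw [Real.norm_eq_abs, abs_of_pos (by positivity)]
    rw [h1n]
    calc 1/(n:ℝ) * ‖x - c₀‖ ≤ 1/n * R := by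
          apply mul_le_mul_of_nonneg_left hxc (by positivity)
      _ < δ := by
          rw [div_mul_eq_mul_div, one_mul, div_lt_iff₀ hnpos]
          linarith
  set q : ℂ → ℕ → ℂ := fun x k => Φ (pt x (k+1)) / Φ (pt x k) with hq_def
  have hq1 : ∀ x ∈ C, ∀ k : ℕ, k < n → ‖q x k - 1‖ < 1 := by
    intro x hx k hk
    have ha := hptC x hx (k+1) hk
    have hb := hptC x hx k hk.le
    have hΦb : Φ (pt x k) ≠ 0 := hne _ hb
    have hb' : m ≤ ‖Φ (pt x k)‖ := hmle _ hb
    have hbpos : 0 < ‖Φ (pt x k)‖ := lt_of_lt_of_le hm hb'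
    have hnum : ‖Φ (pt x (k+1)) - Φ (pt x k)‖ < m := by
      have := hδ' _ ha _ hb (hdist x hx k)
      rwa [dist_eq_norm] at this
    have heq : q x k - 1 = (Φ (pt x (k+1)) - Φ (pt x k)) / Φ (pt x k) := by
      simp only [hq_def]
      rw [sub_div, div_self hΦb]
    rw [heq, norm_div]
    calc ‖Φ (pt x (k+1)) - Φ (pt x k)‖ / ‖Φ (pt x k)‖
        < m / ‖Φ (pt x k)‖ := by gcongr
      _ ≤ 1 := by
          rw [div_le_one hbpos]; exact hb'
  have hqslit : ∀ x ∈ C, ∀ k : ℕ, k < n → q x k ∈ slitPlane := by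
    intro x hx k hk
    have h1 := hq1 x hx k hk
    left
    have h2 : -‖q x k - 1‖ ≤ (q x k - 1).re := by
      have h := Complex.abs_re_le_norm (q x k - 1)
      have := neg_le_of_abs_le h
      linarith [abs_nonneg ((q x k - 1).re)]
    have h3 : (q x k - 1).re = (q x k).re - 1 := by simp
    linarith
  have hqne : ∀ x ∈ C, ∀ k : ℕ, k < n → q x k ≠ 0 := by
    intro x hx k hk h0
    have := hq1 x hx k hk
    rw [h0] at this
    simp at this
  refine ⟨fun x => Complex.log (Φ c₀) + ∑ k ∈ Finset.range n, Complex.log (q x k), ?_, ?_⟩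
  · apply ContinuousOn.add continuousOn_const
    apply continuousOn_finset_sum
    intro k hk
    rw [Finset.mem_range] at hk
    have hptcont : ∀ j : ℕ, Continuous fun x => pt x j := by
      intro j
      simp only [hpt_def]
      fun_prop
    have hΦk : ContinuousOn (fun x => Φ (pt x k)) C :=
      hΦ.comp (hptcont k).continuousOn (fun x hx => hptC x hx k hk.le)
    have hΦk1 : ContinuousOn (fun x => Φ (pt x (k+1))) C :=
      hΦ.comp (hptcont (k+1)).continuousOn (fun x hx => hptC x hx (k+1) hk)
    have hqc : ContinuousOn (fun x => q x k) C :=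
      hΦk1.div hΦk (fun x hx => hne _ (hptC x hx k hk.le))
    exact hqc.clog (fun x hx => hqslit x hx k hk)
  · intro x hx
    have key : ∀ k : ℕ, k ≤ n →
        Complex.exp (Complex.log (Φ c₀) + ∑ j ∈ Finset.range k, Complex.log (q x j))
          = Φ (pt x k) := by
      intro k
      induction k with
      | zero =>
        intro _
        have hpt0 : pt x 0 = c₀ := by simp [hpt_def]
        simp [Complex.exp_log (hne c₀ hc₀), hpt0]
      | succ k ih =>
        intro hk1
        have hk : k < n := hk1
        rw [Finset.sum_range_succ, ← add_assoc, Complex.exp_add, ih hk.le,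
          Complex.exp_log (hqne x hx k hk)]
        simp only [hq_def]
        rw [mul_comm, div_mul_cancel₀ _ (hne _ (hptC x hx k hk.le))]
    have hx_n : pt x n = x := by
      simp only [hpt_def]
      rw [div_self (ne_of_gt hnpos), one_smul]
      abel
    have := key n le_rfl
    rwa [hx_n] at this

lemma re_lt_one_of {w : ℂ} (h : ‖w‖ ≤ 1) (hne : w ≠ 1) : w.re < 1 := by
  have h1 : w.re ≤ 1 := le_trans (Complex.re_le_norm w) h
  rcases h1.lt_or_eq with h2 | h2
  · exact h2
  · exfalso
    apply hne
    have hn : Complex.normSq w ≤ 1 := by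
      have h3 : ‖w‖^2 ≤ 1 := by nlinarith [norm_nonneg w]
      rw [← Complex.sq_norm]
      exact h3
    have h4 := Complex.normSq_apply w
    have him : w.im = 0 := by nlinarith [sq_nonneg w.im]
    exact Complex.ext (by simp [h2]) (by simp [him])

lemma re_gt_neg_one_of {w : ℂ} (h : ‖w‖ ≤ 1) (hne : w ≠ -1) : -1 < w.re := by
  have := re_lt_one_of (w := -w) (by simpa using h) (by
    intro hc
    apply hne
    have : w = -(1:ℂ) := by rw [← hc]; ring
    exact this)
  simp only [Complex.neg_re] at this
  linarith

lemma im_lt_one_of {w : ℂ} (h : ‖w‖ ≤ 1) (hne : w ≠ Complex.I) : w.im < 1 := by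
  have hmul : (w * (-Complex.I)).re = w.im := by simp
  have := re_lt_one_of (w := w * (-Complex.I)) (by
      rw [norm_mul]; simpa using h)
    (by
      intro hc
      apply hne
      have : w * (-Complex.I) * Complex.I = 1 * Complex.I := by rw [hc]
      rw [mul_assoc] at this
      simp only [neg_mul, Complex.I_mul_I, one_mul] at this
      simpa using this)
  rwa [hmul] at this

lemma im_gt_neg_one_of {w : ℂ} (h : ‖w‖ ≤ 1) (hne : w ≠ -Complex.I) : -1 < w.im := by
  have := im_lt_one_of (w := -w) (by simpa using h) (by
    intro hc
    apply hne
    have : w = -Complex.I := by rw [← neg_neg w, hc]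
    exact this)
  simp only [Complex.neg_im] at this
  linarith

lemma no_crossing (P Q : ℝ → ℂ) (hP : Continuous P) (hQ : Continuous Q)
    (hPball : ∀ s ∈ Icc (0:ℝ) 1, ‖P s‖ ≤ 1) (hQball : ∀ t ∈ Icc (0:ℝ) 1, ‖Q t‖ ≤ 1)
    (hP0 : P 0 = 1) (hP1 : P 1 = -1) (hQ0 : Q 0 = Complex.I) (hQ1 : Q 1 = -Complex.I)
    (hdisj : ∀ s ∈ Icc (0:ℝ) 1, ∀ t ∈ Icc (0:ℝ) 1, P s ≠ Q t) : False := by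
  classical
  set Sq : Set ℂ := {z : ℂ | z.re ∈ Icc (0:ℝ) 1 ∧ z.im ∈ Icc (0:ℝ) 1} with hSq_def
  have hSq_conv : Convex ℝ Sq := by
    have h1 : Sq = ({z : ℂ | 0 ≤ z.re} ∩ {z | z.re ≤ 1}) ∩
        ({z | 0 ≤ z.im} ∩ {z | z.im ≤ 1}) := by
      ext z
      simp only [hSq_def, Set.mem_setOf_eq, Set.mem_Icc, Set.mem_inter_iff]
    rw [h1]
    exact ((convex_halfSpace_re_ge 0).inter (convex_halfSpace_re_le 1)).inter
      ((convex_halfSpace_im_ge 0).inter (convex_halfSpace_im_le 1))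
  have hSq_comp : IsCompact Sq := by
    have hclosed : IsClosed Sq := by
      have h2 : Sq = (Complex.re ⁻¹' Icc 0 1) ∩ (Complex.im ⁻¹' Icc 0 1) := rfl
      rw [h2]
      exact (isClosed_Icc.preimage Complex.continuous_re).inter
        (isClosed_Icc.preimage Complex.continuous_im)
    have hbdd : Bornology.IsBounded Sq := by
      apply Bornology.IsBounded.subset (Metric.isBounded_closedBall (x := (0:ℂ)) (r := 2))
      intro z hz
      simp only [Metric.mem_closedBall, dist_zero_right]
      have h3 := Complex.norm_le_abs_re_add_abs_im z
      have h4 : |z.re| ≤ 1 := by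
        rw [abs_le]; exact ⟨by linarith [hz.1.1], hz.1.2⟩
      have h5 : |z.im| ≤ 1 := by
        rw [abs_le]; exact ⟨by linarith [hz.2.1], hz.2.2⟩
      linarith
    exact Metric.isCompact_of_isClosed_isBounded hclosed hbdd
  set Φ : ℂ → ℂ := fun z => Q z.im - P z.re with hΦ_def
  have hΦcont : Continuous Φ := (hQ.comp Complex.continuous_im).sub (hP.comp Complex.continuous_re)
  have hΦne : ∀ z ∈ Sq, Φ z ≠ 0 := by
    intro z hz h0
    rw [sub_eq_zero] at h0
    exact hdisj z.re hz.1 z.im hz.2 h0.symm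
  have hc₀ : (⟨1/2, 1/2⟩ : ℂ) ∈ Sq := by
    constructor
    · constructor <;> norm_num
    · constructor <;> norm_num
  obtain ⟨g, hgc, hge⟩ := exists_log_on_convex hSq_conv hSq_comp hc₀ hΦcont.continuousOn hΦne
  set m : ℝ → ℝ := fun θ => max |Real.cos θ| |Real.sin θ| with hm_def
  have hmpos : ∀ θ, 0 < m θ := by
    intro θ
    rcases lt_or_ge 0 (m θ) with h | h
    · exact h
    · exfalso
      have h1 : |Real.cos θ| ≤ 0 := le_trans (le_max_left _ _) h
      have h2 : |Real.sin θ| ≤ 0 := le_trans (le_max_right _ _) h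
      have h3 := Real.sin_sq_add_cos_sq θ
      have hc : Real.cos θ = 0 := abs_nonpos_iff.mp h1
      have hs : Real.sin θ = 0 := abs_nonpos_iff.mp h2
      rw [hc, hs] at h3
      norm_num at h3
  set u : ℝ → ℝ := fun θ => 1/2 + Real.cos θ / (2 * m θ) with hu_def
  set v : ℝ → ℝ := fun θ => 1/2 + Real.sin θ / (2 * m θ) with hv_def
  set ξ : ℝ → ℂ := fun θ => ⟨u θ, v θ⟩ with hξ_def
  have hξre : ∀ θ, (ξ θ).re = u θ := fun θ => rfl
  have hξim : ∀ θ, (ξ θ).im = v θ := fun θ => rfl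
  have hmcont : Continuous m := Real.continuous_cos.abs.max Real.continuous_sin.abs
  have h2mne : ∀ θ, 2 * m θ ≠ 0 := fun θ => by
    have := hmpos θ; positivity
  have hucont : Continuous u :=
    continuous_const.add (Real.continuous_cos.div (continuous_const.mul hmcont) h2mne)
  have hvcont : Continuous v :=
    continuous_const.add (Real.continuous_sin.div (continuous_const.mul hmcont) h2mne)
  have hξcont : Continuous ξ := by
    have h6 : ξ = fun θ => ((u θ : ℂ) + (v θ : ℂ) * Complex.I) := by
      funext θ
      simp only [hξ_def]
      exact Complex.mk_eq_add_mul_I _ _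
    rw [h6]
    exact (Complex.continuous_ofReal.comp hucont).add
      ((Complex.continuous_ofReal.comp hvcont).mul continuous_const)
  have hcosb : ∀ θ, |Real.cos θ / (2 * m θ)| ≤ 1/2 := by
    intro θ
    have hm := hmpos θ
    rw [abs_div, abs_of_pos (by linarith : (0:ℝ) < 2 * m θ), div_le_iff₀ (by linarith)]
    calc |Real.cos θ| ≤ m θ := le_max_left _ _
      _ ≤ 1/2 * (2 * m θ) := by linarith
  have hsinb : ∀ θ, |Real.sin θ / (2 * m θ)| ≤ 1/2 := by
    intro θ
    have hm := hmpos θ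
    rw [abs_div, abs_of_pos (by linarith : (0:ℝ) < 2 * m θ), div_le_iff₀ (by linarith)]
    calc |Real.sin θ| ≤ m θ := le_max_right _ _
      _ ≤ 1/2 * (2 * m θ) := by linarith
  have hξSq : ∀ θ, ξ θ ∈ Sq := by
    intro θ
    have h7 := abs_le.mp (hcosb θ)
    have h8 := abs_le.mp (hsinb θ)
    constructor
    · rw [hξre]
      constructor
      · simp only [hu_def]; linarith [h7.1]
      · simp only [hu_def]; linarith [h7.2]
    · rw [hξim]
      constructor
      · simp only [hv_def]; linarith [h8.1]
      · simp only [hv_def]; linarith [h8.2]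
  have hbd : ∀ θ, (ξ θ).re = 0 ∨ (ξ θ).re = 1 ∨ (ξ θ).im = 0 ∨ (ξ θ).im = 1 := by
    intro θ
    have hm := hmpos θ
    rcases max_cases |Real.cos θ| |Real.sin θ| with ⟨hmax, _⟩ | ⟨hmax, _⟩
    · rcases abs_cases (Real.cos θ) with ⟨hc, _⟩ | ⟨hc, _⟩
      · right; left
        rw [hξre]
        simp only [hu_def]
        have hcm : Real.cos θ = m θ := by simp only [hm_def]; rw [hmax, hc]
        have hdiv : m θ / (2 * m θ) = 1/2 := by rw [div_eq_iff (h2mne θ)]; ring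
        rw [hcm, hdiv]
        norm_num
      · left
        rw [hξre]
        simp only [hu_def]
        have hcm : Real.cos θ = - m θ := by simp only [hm_def]; rw [hmax, hc]; ring
        have hdiv : m θ / (2 * m θ) = 1/2 := by rw [div_eq_iff (h2mne θ)]; ring
        rw [hcm, neg_div, hdiv]
        norm_num
    · rcases abs_cases (Real.sin θ) with ⟨hs, _⟩ | ⟨hs, _⟩
      · right; right; right
        rw [hξim]
        simp only [hv_def]
        have hsm : Real.sin θ = m θ := by simp only [hm_def]; rw [hmax, hs]
        have hdiv : m θ / (2 * m θ) = 1/2 := by rw [div_eq_iff (h2mne θ)]; ring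
        rw [hsm, hdiv]
        norm_num
      · right; right; left
        rw [hξim]
        simp only [hv_def]
        have hsm : Real.sin θ = - m θ := by simp only [hm_def]; rw [hmax, hs]; ring
        have hdiv : m θ / (2 * m θ) = 1/2 := by rw [div_eq_iff (h2mne θ)]; ring
        rw [hsm, neg_div, hdiv]
        norm_num
  have hξπ : ∀ θ, ξ (θ + π) = (1 + Complex.I) - ξ θ := by
    intro θ
    have hm' : m (θ + π) = m θ := by
      simp only [hm_def, Real.cos_add_pi, Real.sin_add_pi, abs_neg]
    have hre2 : u (θ + π) = 1 - u θ := by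
      simp only [hu_def]
      rw [Real.cos_add_pi, hm', neg_div]
      ring
    have him2 : v (θ + π) = 1 - v θ := by
      simp only [hv_def]
      rw [Real.sin_add_pi, hm', neg_div]
      ring
    apply Complex.ext
    · rw [hξre, hre2, Complex.sub_re, Complex.add_re, Complex.one_re, Complex.I_re, hξre]
      ring
    · rw [hξim, him2, Complex.sub_im, Complex.add_im, Complex.one_im, Complex.I_im, hξim]
      ring
  set c : ℝ → ℂ := fun θ => g (ξ θ) - g (ξ (θ + π)) with hc_def
  have hgξ : Continuous fun θ => g (ξ θ) := hgc.comp_continuous hξcont hξSq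
  have hccont : Continuous c :=
    hgξ.sub (hgξ.comp (continuous_id.add continuous_const))
  set f : ℝ → ℝ := fun θ => (c θ).im with hf_def
  have hfcont : Continuous f := Complex.continuous_im.comp hccont
  have hfanti : ∀ θ, f (θ + π) = - f θ := by
    intro θ
    have h2 : ξ (θ + π + π) = ξ θ := by
      rw [hξπ (θ + π), hξπ θ]
      ring
    simp only [hf_def, hc_def, h2, Complex.sub_im]
    ring
  -- the key nonvanishing claim
  have hsign_re0 : ∀ z ∈ Sq, z.re = 0 → (Φ z).re < 0 := by
    intro z hz h0
    have h9 : Φ z = Q z.im - 1 := by simp only [hΦ_def, h0, hP0]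
    rw [h9, Complex.sub_re, Complex.one_re]
    have hlt := re_lt_one_of (hQball z.im hz.2) (fun hc => hdisj 0 ⟨le_refl 0, zero_le_one⟩
      z.im hz.2 (by rw [hP0, hc]))
    linarith
  have hsign_re1 : ∀ z ∈ Sq, z.re = 1 → 0 < (Φ z).re := by
    intro z hz h0
    have h9 : Φ z = Q z.im + 1 := by simp only [hΦ_def, h0, hP1]; ring
    rw [h9, Complex.add_re, Complex.one_re]
    have hlt := re_gt_neg_one_of (hQball z.im hz.2) (fun hc => hdisj 1 ⟨zero_le_one, le_refl 1⟩
      z.im hz.2 (by rw [hP1, hc]))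
    linarith
  have hsign_im0 : ∀ z ∈ Sq, z.im = 0 → 0 < (Φ z).im := by
    intro z hz h0
    have h9 : Φ z = Complex.I - P z.re := by simp only [hΦ_def, h0, hQ0]
    rw [h9, Complex.sub_im, Complex.I_im]
    have hlt := im_lt_one_of (hPball z.re hz.1) (fun hc => hdisj z.re hz.1 0
      ⟨le_refl 0, zero_le_one⟩ (by rw [hQ0, hc]))
    linarith
  have hsign_im1 : ∀ z ∈ Sq, z.im = 1 → (Φ z).im < 0 := by
    intro z hz h0
    have h9 : Φ z = -Complex.I - P z.re := by simp only [hΦ_def, h0, hQ1]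
    rw [h9, Complex.sub_im, Complex.neg_im, Complex.I_im]
    have hlt := im_gt_neg_one_of (hPball z.re hz.1) (fun hc => hdisj z.re hz.1 1
      ⟨zero_le_one, le_refl 1⟩ (by rw [hQ1, hc]))
    linarith
  have hfne : ∀ θ, f θ ≠ 0 := by
    intro θ hf0
    have hxS := hξSq θ
    have hyS := hξSq (θ + π)
    have hyx : ξ (θ + π) = (1 + Complex.I) - ξ θ := hξπ θ
    have hexp : Complex.exp (c θ) = Φ (ξ θ) / Φ (ξ (θ + π)) := by
      simp only [hc_def]
      rw [Complex.exp_sub, hge _ hxS, hge _ hyS]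
    have hcreal : c θ = ((c θ).re : ℂ) := by
      apply Complex.ext
      · simp
      · simpa [hf_def] using hf0
    set t : ℝ := Real.exp ((c θ).re) with ht_def
    have ht : 0 < t := Real.exp_pos _
    have hΦyne := hΦne _ hyS
    have heq : Φ (ξ θ) = (t : ℂ) * Φ (ξ (θ + π)) := by
      have h10 : Complex.exp (c θ) = (t : ℂ) := by
        rw [hcreal, ht_def]
        exact (Complex.ofReal_exp _).symm
      rw [h10] at hexp
      rw [eq_comm, div_eq_iff hΦyne] at hexp
      exact hexp
    have hretx : (Φ (ξ θ)).re = t * (Φ (ξ (θ + π))).re := by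
      rw [heq, Complex.re_ofReal_mul]
    have himtx : (Φ (ξ θ)).im = t * (Φ (ξ (θ + π))).im := by
      rw [heq, Complex.im_ofReal_mul]
    rcases hbd θ with h | h | h | h
    · have hy1 : (ξ (θ + π)).re = 1 := by
        rw [hyx]; simp only [Complex.sub_re, Complex.add_re, Complex.one_re, Complex.I_re, h]
        rw [hξre] at h
        linarith
      have h1 := hsign_re0 _ hxS h
      have h2 := hsign_re1 _ hyS hy1
      nlinarith
    · have hy1 : (ξ (θ + π)).re = 0 := by
        rw [hyx]; simp only [Complex.sub_re, Complex.add_re, Complex.one_re, Complex.I_re, h]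
        rw [hξre] at h
        linarith
      have h1 := hsign_re1 _ hxS h
      have h2 := hsign_re0 _ hyS hy1
      nlinarith
    · have hy1 : (ξ (θ + π)).im = 1 := by
        rw [hyx]; simp only [Complex.sub_im, Complex.add_im, Complex.one_im, Complex.I_im, h]
        rw [hξim] at h
        linarith
      have h1 := hsign_im0 _ hxS h
      have h2 := hsign_im1 _ hyS hy1
      nlinarith
    · have hy1 : (ξ (θ + π)).im = 0 := by
        rw [hyx]; simp only [Complex.sub_im, Complex.add_im, Complex.one_im, Complex.I_im, h]
        rw [hξim] at h
        linarith
      have h1 := hsign_im1 _ hxS h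
      have h2 := hsign_im0 _ hyS hy1
      nlinarith
  have hπ0 : f π = - f 0 := by
    have h11 := hfanti 0
    rwa [zero_add] at h11
  rcases lt_or_gt_of_ne (hfne 0) with hneg | hpos
  · have hmem : (0:ℝ) ∈ Icc (f 0) (f π) := ⟨hneg.le, by rw [hπ0]; linarith⟩
    obtain ⟨θ₀, _, hθ₀⟩ := intermediate_value_Icc Real.pi_pos.le hfcont.continuousOn hmem
    exact hfne θ₀ hθ₀
  · have hmem : (0:ℝ) ∈ Icc (f π) (f 0) := ⟨by rw [hπ0]; linarith, hpos.le⟩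
    obtain ⟨θ₀, _, hθ₀⟩ := intermediate_value_Icc' Real.pi_pos.le hfcont.continuousOn hmem
    exact hfne θ₀ hθ₀

end Helpers

lemma arc_tail {A : Set ℂ} {p q : ℂ} (h : IsArcFromTo A p q) (hqp : q ≠ p) :
    IsPreconnected (A \ {p}) ∧ q ∈ A \ {p} := by
  obtain ⟨f, hc, hi, hr, h0, h1⟩ := h
  set g : ℝ → ℂ := fun s => f (Set.projIcc 0 1 zero_le_one s) with hg
  have hgc : Continuous g := hc.comp continuous_projIcc
  have him : A \ {p} = g '' Set.Ioc 0 1 := by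
    ext z
    constructor
    · rintro ⟨hzA, hzp⟩
      rw [← hr] at hzA
      obtain ⟨t, ht⟩ := hzA
      simp only [Set.mem_singleton_iff] at hzp
      have ht0 : t ≠ 0 := by
        rintro rfl
        rw [h0] at ht
        exact hzp ht.symm
      refine ⟨(t : ℝ), ⟨?_, t.2.2⟩, ?_⟩
      · rcases lt_or_eq_of_le t.2.1 with h' | h'
        · exact h'
        · exact absurd (Subtype.ext h'.symm) ht0
      · simp only [hg, Set.projIcc_val]
        exact ht
    · rintro ⟨s, hs, hsz⟩
      have hmem : s ∈ Set.Icc (0:ℝ) 1 := ⟨hs.1.le, hs.2⟩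
      have hproj : Set.projIcc 0 1 zero_le_one s = ⟨s, hmem⟩ := Set.projIcc_of_mem _ hmem
      constructor
      · rw [← hr]
        exact ⟨_, hsz⟩
      · simp only [Set.mem_singleton_iff]
        intro hzp
        have : f (Set.projIcc 0 1 zero_le_one s) = f 0 := by
          rw [h0, ← hzp]
          exact hsz
        have := hi this
        rw [hproj] at this
        have : s = 0 := by simpa using congrArg Subtype.val this
        linarith [hs.1]
  constructor
  · rw [him]
    exact isPreconnected_Ioc.image g hgc.continuousOn
  · refine ⟨?_, by simpa using hqp⟩
    rw [← hr]
    exact ⟨1, h1⟩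

theorem stmt5
    (S : Set ℂ) (hS : S = Metric.sphere (0 : ℂ) 1)
    (a b : Fin 4 → ℂ)
    (ha0 : a 0 = 1) (ha1 : a 1 = Complex.I) (ha2 : a 2 = -1) (ha3 : a 3 = -Complex.I)
    (A : Fin 4 → Set ℂ)
    (hArc : ∀ i, IsArcFromTo (A i) (a i) (b i))
    (hdisj : ∀ i j, i ≠ j → Disjoint (A i) (A j))
    (hAS : ∀ i, A i ∩ S = {a i})
    (hb : ∀ i, ‖b i‖ < 1)
    (K : Set ℂ) (hKsub : K ⊆ (A 1 ∪ S ∪ A 3)ᶜ)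
    (hKcomp : IsCompact K) (hKconn : IsConnected K)
    (hb1K : b 0 ∈ K) (hb3K : b 2 ∈ K) :
    b 3 ∉ connectedComponentIn ((A 0 ∪ S ∪ A 2 ∪ K)ᶜ) (b 1) := by
  intro hcon
  -- basic facts
  have haAS : ∀ i, a i ∈ A i ∩ S := by
    intro i; rw [hAS i]; exact Set.mem_singleton _
  have hSnorm : ∀ z ∈ S, ‖z‖ = 1 := by
    intro z hz; rw [hS] at hz; rwa [Metric.mem_sphere, dist_zero_right] at hz
  have hnormS : ∀ z : ℂ, ‖z‖ = 1 → z ∈ S := by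
    intro z hz; rw [hS, Metric.mem_sphere, dist_zero_right]; exact hz
  have hanorm : ∀ i, ‖a i‖ = 1 := fun i => hSnorm _ (haAS i).2
  have hbA : ∀ i, b i ∈ A i := by
    intro i; obtain ⟨f, hc, hi', hr, h0, h1⟩ := hArc i; rw [← hr]; exact ⟨1, h1⟩
  have hbna : ∀ i j, b i ≠ a j := by
    intro i j h
    have h2 := hanorm j
    rw [← h] at h2
    linarith [hb i]
  have hAcomp : ∀ i, IsCompact (A i) := by
    intro i; obtain ⟨f, hc, _, hr, _, _⟩ := hArc i; rw [← hr]; exact isCompact_range hc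
  set B : Set ℂ := A 0 ∪ S ∪ A 2 ∪ K with hB_def
  have hBclosed : IsClosed B :=
    ((((hAcomp 0).isClosed.union (hS ▸ Metric.isClosed_sphere)).union
      (hAcomp 2).isClosed).union hKcomp.isClosed)
  have hSB : S ⊆ B := fun z hz => Or.inl (Or.inl (Or.inr hz))
  have hKB : K ⊆ B := fun z hz => Or.inr hz
  have hA0B : A 0 ⊆ B := fun z hz => Or.inl (Or.inl (Or.inl hz))
  have hA2B : A 2 ⊆ B := fun z hz => Or.inl (Or.inr hz)
  -- ball helper
  have ball_help : ∀ T : Set ℂ, IsPreconnected T → (∀ z ∈ T, ‖z‖ ≠ 1) →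
      ∀ w ∈ T, ‖w‖ < 1 → T ⊆ Metric.ball (0:ℂ) 1 := by
    intro T hT hTn w hw hw1
    have hu : IsOpen (Metric.ball (0:ℂ) 1) := Metric.isOpen_ball
    have hv : IsOpen {z : ℂ | 1 < ‖z‖} := isOpen_lt continuous_const continuous_norm
    have hdisj' : Disjoint (Metric.ball (0:ℂ) 1) {z : ℂ | 1 < ‖z‖} := by
      rw [Set.disjoint_left]
      intro z hz1 hz2
      rw [Metric.mem_ball, dist_zero_right] at hz1
      simp only [Set.mem_setOf_eq] at hz2
      linarith
    have hsub : T ⊆ Metric.ball 0 1 ∪ {z | 1 < ‖z‖} := by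
      intro z hz
      rcases lt_trichotomy ‖z‖ 1 with h | h | h
      · left; rwa [Metric.mem_ball, dist_zero_right]
      · exact absurd h (hTn z hz)
      · right; exact h
    exact hT.subset_left_of_subset_union hu hv hdisj' hsub
      ⟨w, hw, by rwa [Metric.mem_ball, dist_zero_right]⟩
  have hb1c : b 1 ∈ Bᶜ := by
    intro hmem
    rcases hmem with ((h | h) | h) | h
    · exact Set.disjoint_left.mp (hdisj 0 1 (by decide)) h (hbA 1)
    · have := hSnorm _ h; linarith [hb 1]
    · exact Set.disjoint_left.mp (hdisj 2 1 (by decide)) h (hbA 1)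
    · exact (hKsub h) (Or.inl (Or.inl (hbA 1)))
  set U := connectedComponentIn Bᶜ (b 1) with hU_def
  have hUopen : IsOpen U := hBclosed.isOpen_compl.connectedComponentIn
  have hUsub : U ⊆ Bᶜ := connectedComponentIn_subset _ _
  have hb1U : b 1 ∈ U := mem_connectedComponentIn hb1c
  have hUconn : IsConnected U := isConnected_connectedComponentIn_iff.mpr hb1c
  have hUnorm : ∀ z ∈ U, ‖z‖ ≠ 1 := by
    intro z hz h1
    exact (hUsub hz) (hSB (hnormS z h1))
  have hUball : U ⊆ Metric.ball 0 1 :=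
    ball_help U hUconn.isPreconnected hUnorm (b 1) hb1U (hb 1)
  have hJ : JoinedIn U (b 1) (b 3) :=
    ((hUopen.isConnected_iff_isPathConnected).mp hUconn).joinedIn _ hb1U _ hcon
  -- arc tails in ball
  have htail : ∀ i, A i \ {a i} ⊆ Metric.ball 0 1 := by
    intro i
    have ht := arc_tail (hArc i) (hbna i i)
    apply ball_help _ ht.1 ?_ (b i) ht.2 (hb i)
    intro z hz h1
    have : z ∈ A i ∩ S := ⟨hz.1, hnormS z h1⟩
    rw [hAS i] at this
    exact hz.2 this
  have hAcb : ∀ i, A i ⊆ Metric.closedBall 0 1 := by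
    intro i z hz
    by_cases hza : z = a i
    · rw [mem_closedBall_zero_iff, hza]
      exact (hanorm i).le
    · exact Metric.ball_subset_closedBall (htail i ⟨hz, hza⟩)
  -- the path PM from a 1 to a 3
  obtain ⟨f₁, hc₁, hi₁, hr₁, h10, h11⟩ := hArc 1
  obtain ⟨f₃, hc₃, hi₃, hr₃, h30, h31⟩ := hArc 3
  set P1 : Path (a 1) (b 1) := { toFun := f₁, continuous_toFun := hc₁, source' := h10, target' := h11 } with hP1_def
  set P3 : Path (a 3) (b 3) := { toFun := f₃, continuous_toFun := hc₃, source' := h30, target' := h31 } with hP3_def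
  set PM : Path (a 1) (a 3) := (P1.trans hJ.somePath).trans P3.symm with hPM_def
  have hPMrange : range ⇑PM ⊆ A 1 ∪ U ∪ A 3 := by
    rw [hPM_def, Path.trans_range, Path.trans_range, Path.symm_range]
    apply Set.union_subset (Set.union_subset ?_ ?_) ?_
    · intro z hz
      left; left
      rw [← hr₁]
      exact hz
    · intro z hz
      left; right
      obtain ⟨t, ht⟩ := hz
      exact ht ▸ hJ.somePath_mem t
    · intro z hz
      right
      rw [← hr₃]
      exact hz
  set M₀ := range ⇑PM with hM₀_def
  have hM₀closed : IsClosed M₀ := (isCompact_range PM.continuous).isClosed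
  have hM₀cb : M₀ ⊆ Metric.closedBall 0 1 := by
    intro z hz
    rcases hPMrange hz with (h | h) | h
    · exact hAcb 1 h
    · exact Metric.ball_subset_closedBall (hUball h)
    · exact hAcb 3 h
  have hKM₀ : ∀ z ∈ K, z ∉ M₀ := by
    intro z hzK hzM
    rcases hPMrange hzM with (h | h) | h
    · exact (hKsub hzK) (Or.inl (Or.inl h))
    · exact (hUsub h) (hKB hzK)
    · exact (hKsub hzK) (Or.inr h)
  have hKnorm : ∀ z ∈ K, ‖z‖ ≠ 1 := by
    intro z hz h1
    exact (hKsub hz) (Or.inl (Or.inr (hnormS z h1)))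
  have hKball : K ⊆ Metric.ball 0 1 :=
    ball_help K hKconn.isPreconnected hKnorm (b 0) hb1K (hb 0)
  set W := Metric.ball (0:ℂ) 1 ∩ M₀ᶜ with hW_def
  have hWopen : IsOpen W := Metric.isOpen_ball.inter hM₀closed.isOpen_compl
  have hKW : K ⊆ W := fun z hz => ⟨hKball hz, hKM₀ z hz⟩
  set V := connectedComponentIn W (b 0) with hV_def
  have hb0W : b 0 ∈ W := hKW hb1K
  have hKV : K ⊆ V := hKconn.isPreconnected.subset_connectedComponentIn hb1K hKW
  have hVopen : IsOpen V := hWopen.connectedComponentIn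
  have hVconn : IsConnected V := isConnected_connectedComponentIn_iff.mpr hb0W
  have hVsub : V ⊆ W := connectedComponentIn_subset _ _
  have hq : JoinedIn V (b 0) (b 2) :=
    ((hVopen.isConnected_iff_isPathConnected).mp hVconn).joinedIn _
      (mem_connectedComponentIn hb0W) _ (hKV hb3K)
  obtain ⟨f₀, hc₀, hi₀, hr₀, h00, h01⟩ := hArc 0
  obtain ⟨f₂, hc₂, hi₂, hr₂, h20, h21⟩ := hArc 2
  set P0 : Path (a 0) (b 0) := { toFun := f₀, continuous_toFun := hc₀, source' := h00, target' := h01 } with hP0_def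
  set P2 : Path (a 2) (b 2) := { toFun := f₂, continuous_toFun := hc₂, source' := h20, target' := h21 } with hP2_def
  set PL : Path (a 0) (a 2) := (P0.trans hq.somePath).trans P2.symm with hPL_def
  have hPLrange : range ⇑PL ⊆ A 0 ∪ V ∪ A 2 := by
    rw [hPL_def, Path.trans_range, Path.trans_range, Path.symm_range]
    apply Set.union_subset (Set.union_subset ?_ ?_) ?_
    · intro z hz
      left; left
      rw [← hr₀]
      exact hz
    · intro z hz
      left; right
      obtain ⟨t, ht⟩ := hz
      exact ht ▸ hq.somePath_mem t
    · intro z hz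
      right
      rw [← hr₂]
      exact hz
  have hPLcb : range ⇑PL ⊆ Metric.closedBall 0 1 := by
    intro z hz
    rcases hPLrange hz with (h | h) | h
    · exact hAcb 0 h
    · exact Metric.ball_subset_closedBall (hVsub h).1
    · exact hAcb 2 h
  have hLM : ∀ z, z ∈ range ⇑PL → z ∈ M₀ → False := by
    intro z hzL hzM
    rcases hPLrange hzL with (h | h) | h
    · rcases hPMrange hzM with (h' | h') | h'
      · exact Set.disjoint_left.mp (hdisj 0 1 (by decide)) h h'
      · exact (hUsub h') (hA0B h)
      · exact Set.disjoint_left.mp (hdisj 0 3 (by decide)) h h'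
    · exact (hVsub h).2 hzM
    · rcases hPMrange hzM with (h' | h') | h'
      · exact Set.disjoint_left.mp (hdisj 2 1 (by decide)) h h'
      · exact (hUsub h') (hA2B h)
      · exact Set.disjoint_left.mp (hdisj 2 3 (by decide)) h h'
  apply no_crossing (fun s => PL.extend s) (fun t => PM.extend t)
    PL.continuous_extend PM.continuous_extend
  · intro s _
    have : PL.extend s ∈ range ⇑PL := by
      rw [← Path.extend_range]
      exact Set.mem_range_self s
    exact mem_closedBall_zero_iff.mp (hPLcb this)
  · intro t _
    have : PM.extend t ∈ range ⇑PM := by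
      rw [← Path.extend_range]
      exact Set.mem_range_self t
    exact mem_closedBall_zero_iff.mp (hM₀cb this)
  · rw [Path.extend_zero, ha0]
  · rw [Path.extend_one, ha2]
  · rw [Path.extend_zero, ha1]
  · rw [Path.extend_one, ha3]
  · intro s _ t _ heq
    apply hLM (PL.extend s)
    · rw [← Path.extend_range]
      exact Set.mem_range_self s
    · rw [heq, hM₀_def, ← Path.extend_range]
      exact Set.mem_range_self t
end

section
/- Every Suslinian plane continuum is contained in a locally connected Suslinian plane continuum. -/
open Set Topology

/-- `X` is Suslinian: every family of pairwise disjoint nondegenerate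
subcontinua of `X` is countable. -/
def Suslinian {α : Type*} [TopologicalSpace α] (X : Set α) : Prop :=
  ∀ 𝒞 : Set (Set α), (∀ K ∈ 𝒞, K ⊆ X ∧ IsCompact K ∧ IsConnected K ∧ K.Nontrivial) →
    𝒞.Pairwise Disjoint → 𝒞.Countable

namespace Stmt9

open MeasureTheory

noncomputable def hh (k : ℕ) : ℝ := (1/2 : ℝ)^k

lemma hh_pos (k : ℕ) : 0 < hh k := by unfold hh; positivity

lemma hh_succ (k : ℕ) : hh k = 2 * hh (k+1) := by
  simp only [hh, pow_succ]; ring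

lemma hh_anti {k l : ℕ} (h : k ≤ l) : hh l ≤ hh k :=
  pow_le_pow_of_le_one (by norm_num) (by norm_num) h

lemma hh_lt_of_lt {k l : ℕ} (h : k < l) : hh l < hh k :=
  pow_lt_pow_right_of_lt_one₀ (by norm_num) (by norm_num) h

lemma hh_le_one (k : ℕ) : hh k ≤ 1 := by
  simpa [show hh 0 = 1 by simp [hh]] using hh_anti (Nat.zero_le k)

lemma hh_mul_pow (k : ℕ) : hh k * 2^k = 1 := by
  rw [hh, div_pow, one_pow, one_div, inv_mul_cancel₀ (by positivity)]

lemma exists_hh_lt {δ : ℝ} (hδ : 0 < δ) : ∃ k, hh k < δ := by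
  obtain ⟨k, hk⟩ := exists_pow_lt_of_lt_one hδ (show (1/2:ℝ) < 1 by norm_num)
  exact ⟨k, hk⟩

lemma le_mul_pow_iff {k : ℕ} {a : ℤ} {x : ℝ} : (a:ℝ) * hh k ≤ x ↔ (a : ℝ) ≤ x * 2^k := by
  constructor
  · intro h
    have := mul_le_mul_of_nonneg_right h (le_of_lt (show (0:ℝ) < 2^k by positivity))
    rwa [mul_assoc, hh_mul_pow, mul_one] at this
  · intro h
    have := mul_le_mul_of_nonneg_right h (le_of_lt (hh_pos k))
    rwa [mul_assoc, mul_comm ((2:ℝ)^k), hh_mul_pow, mul_one] at this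

lemma mul_pow_le_iff {k : ℕ} {a : ℤ} {x : ℝ} : x ≤ (a:ℝ) * hh k ↔ x * 2^k ≤ (a:ℝ) := by
  constructor
  · intro h
    have := mul_le_mul_of_nonneg_right h (le_of_lt (show (0:ℝ) < 2^k by positivity))
    rwa [mul_assoc, hh_mul_pow, mul_one] at this
  · intro h
    have := mul_le_mul_of_nonneg_right h (le_of_lt (hh_pos k))
    rwa [mul_assoc, mul_comm ((2:ℝ)^k), hh_mul_pow, mul_one] at this

def cell (k : ℕ) (i j : ℤ) : Set (ℝ × ℝ) :=
  Icc ((i:ℝ) * hh k) (((i:ℝ)+1) * hh k) ×ˢ Icc ((j:ℝ) * hh k) (((j:ℝ)+1) * hh k)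

def edge (k : ℕ) (i j : ℤ) : Fin 4 → Set (ℝ × ℝ)
  | 0 => {((i:ℝ) * hh k)} ×ˢ Icc ((j:ℝ) * hh k) (((j:ℝ)+1) * hh k)
  | 1 => {(((i:ℝ)+1) * hh k)} ×ˢ Icc ((j:ℝ) * hh k) (((j:ℝ)+1) * hh k)
  | 2 => Icc ((i:ℝ) * hh k) (((i:ℝ)+1) * hh k) ×ˢ {((j:ℝ) * hh k)}
  | 3 => Icc ((i:ℝ) * hh k) (((i:ℝ)+1) * hh k) ×ˢ {(((j:ℝ)+1) * hh k)}

def bdry (k : ℕ) (i j : ℤ) : Set (ℝ × ℝ) := ⋃ t : Fin 4, edge k i j t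

lemma edge_subset_cell (k : ℕ) (i j : ℤ) (t : Fin 4) : edge k i j t ⊆ cell k i j := by
  have h1 : (i:ℝ) * hh k ≤ ((i:ℝ)+1) * hh k := by nlinarith [hh_pos k]
  have h2 : (j:ℝ) * hh k ≤ ((j:ℝ)+1) * hh k := by nlinarith [hh_pos k]
  fin_cases t <;>
    · rintro ⟨x, y⟩ ⟨hx, hy⟩
      simp only [mem_singleton_iff] at *
      constructor <;> (simp_all [cell]; try constructor) <;> simp_all [le_refl, h1, h2]

lemma edge_convex (k : ℕ) (i j : ℤ) (t : Fin 4) : Convex ℝ (edge k i j t) := by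
  fin_cases t <;>
    first
      | exact (convex_singleton _).prod (convex_Icc _ _)
      | exact (convex_Icc _ _).prod (convex_singleton _)

lemma edge_closed (k : ℕ) (i j : ℤ) (t : Fin 4) : IsClosed (edge k i j t) := by
  fin_cases t <;>
    first
      | exact isClosed_singleton.prod isClosed_Icc
      | exact isClosed_Icc.prod isClosed_singleton

lemma bdry_subset_cell (k : ℕ) (i j : ℤ) : bdry k i j ⊆ cell k i j :=
  iUnion_subset fun t => edge_subset_cell k i j t

lemma bdry_closed (k : ℕ) (i j : ℤ) : IsClosed (bdry k i j) := by
  have : bdry k i j = ⋃ t ∈ (Finset.univ : Finset (Fin 4)), edge k i j t := by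
    simp [bdry]
  rw [this]
  exact (Finset.univ : Finset (Fin 4)).finite_toSet.isClosed_biUnion
    fun t _ => edge_closed k i j t

lemma corner_mem (k : ℕ) (i j : ℤ) {x y : ℝ}
    (hx : x = (i:ℝ) * hh k ∨ x = ((i:ℝ)+1) * hh k)
    (hy : y = (j:ℝ) * hh k ∨ y = ((j:ℝ)+1) * hh k) :
    (x, y) ∈ bdry k i j := by
  have h2 : (j:ℝ) * hh k ≤ ((j:ℝ)+1) * hh k := by nlinarith [hh_pos k]
  rcases hx with hx | hx
  · exact mem_iUnion.2 ⟨0, by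
      refine ⟨by simpa using hx, ?_⟩
      rcases hy with hy | hy <;> simp [hy, h2]⟩
  · exact mem_iUnion.2 ⟨1, by
      refine ⟨by simpa using hx, ?_⟩
      rcases hy with hy | hy <;> simp [hy, h2]⟩

lemma bdry_nonempty (k : ℕ) (i j : ℤ) : (bdry k i j).Nonempty :=
  ⟨((i:ℝ) * hh k, (j:ℝ) * hh k), corner_mem k i j (Or.inl rfl) (Or.inl rfl)⟩

lemma edge_preconn (k : ℕ) (i j : ℤ) (t : Fin 4) : IsPreconnected (edge k i j t) :=
  (edge_convex k i j t).isPreconnected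

lemma bdry_preconn (k : ℕ) (i j : ℤ) : IsPreconnected (bdry k i j) := by
  have h2 : (j:ℝ) * hh k ≤ ((j:ℝ)+1) * hh k := by nlinarith [hh_pos k]
  have h1 : (i:ℝ) * hh k ≤ ((i:ℝ)+1) * hh k := by nlinarith [hh_pos k]
  have c00 : ((i:ℝ) * hh k, (j:ℝ) * hh k) ∈ edge k i j 0 ∩ edge k i j 2 := by
    constructor <;> simp [edge, h1, h2]
  have c10 : (((i:ℝ)+1) * hh k, (j:ℝ) * hh k) ∈ edge k i j 1 ∩ edge k i j 2 := by
    constructor <;> simp [edge, h1, h2]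
  have c11 : (((i:ℝ)+1) * hh k, ((j:ℝ)+1) * hh k) ∈ edge k i j 1 ∩ edge k i j 3 := by
    constructor <;> simp [edge, h1, h2]
  have hb : bdry k i j = (edge k i j 0 ∪ edge k i j 2) ∪ (edge k i j 1 ∪ edge k i j 3) := by
    rw [bdry]
    ext p
    simp only [mem_iUnion, mem_union]
    constructor
    · rintro ⟨t, ht⟩
      fin_cases t
      · exact Or.inl (Or.inl ht)
      · exact Or.inr (Or.inl ht)
      · exact Or.inl (Or.inr ht)
      · exact Or.inr (Or.inr ht)
    · rintro ((h | h) | (h | h))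
      exacts [⟨0, h⟩, ⟨2, h⟩, ⟨1, h⟩, ⟨3, h⟩]
  rw [hb]
  have p02 : IsPreconnected (edge k i j 0 ∪ edge k i j 2) :=
    IsPreconnected.union _ c00.1 c00.2 (edge_preconn k i j 0) (edge_preconn k i j 2)
  have p13 : IsPreconnected (edge k i j 1 ∪ edge k i j 3) :=
    IsPreconnected.union _ c11.1 c11.2 (edge_preconn k i j 1) (edge_preconn k i j 3)
  -- join via c10 ∈ edge 2 (left part) and edge 1 (right part)
  apply IsPreconnected.union (((i:ℝ)+1) * hh k, (j:ℝ) * hh k) _ _ p02 p13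
  · exact Or.inr c10.2
  · exact Or.inl c10.1


noncomputable def ci (k : ℕ) (x : ℝ) : ℤ := ⌊x * 2^k⌋

lemma mem_cell_iff {k : ℕ} {i j : ℤ} {p : ℝ × ℝ} :
    p ∈ cell k i j ↔ ((i:ℝ) ≤ p.1 * 2^k ∧ p.1 * 2^k ≤ (i:ℝ)+1)
      ∧ ((j:ℝ) ≤ p.2 * 2^k ∧ p.2 * 2^k ≤ (j:ℝ)+1) := by
  have e1 : ((i:ℝ)+1) = ((i+1 : ℤ) : ℝ) := by push_cast; ring
  have e2 : ((j:ℝ)+1) = ((j+1 : ℤ) : ℝ) := by push_cast; ring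
  constructor
  · rintro ⟨⟨h1, h2⟩, ⟨h3, h4⟩⟩
    rw [e1] at h2 ⊢
    rw [e2] at h4 ⊢
    exact ⟨⟨le_mul_pow_iff.1 h1, mul_pow_le_iff.1 h2⟩, ⟨le_mul_pow_iff.1 h3, mul_pow_le_iff.1 h4⟩⟩
  · rintro ⟨⟨h1, h2⟩, ⟨h3, h4⟩⟩
    rw [e1] at h2
    rw [e2] at h4
    exact ⟨⟨le_mul_pow_iff.2 h1, by rw [e1]; exact mul_pow_le_iff.2 h2⟩,
      ⟨le_mul_pow_iff.2 h3, by rw [e2]; exact mul_pow_le_iff.2 h4⟩⟩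

lemma mem_cell_ci (k : ℕ) (p : ℝ × ℝ) : p ∈ cell k (ci k p.1) (ci k p.2) := by
  rw [mem_cell_iff]
  exact ⟨⟨Int.floor_le _, (Int.lt_floor_add_one _).le⟩,
    ⟨Int.floor_le _, (Int.lt_floor_add_one _).le⟩⟩

lemma ci_succ (k : ℕ) (x : ℝ) : 2 * ci k x ≤ ci (k+1) x ∧ ci (k+1) x ≤ 2 * ci k x + 1 := by
  have h2 : x * 2^(k+1) = 2 * (x * 2^k) := by ring
  have hfl : (ci k x : ℝ) ≤ x * 2^k := Int.floor_le _
  have hfu : x * 2^k < (ci k x : ℝ) + 1 := Int.lt_floor_add_one _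
  have hfl' : (ci (k+1) x : ℝ) ≤ x * 2^(k+1) := Int.floor_le _
  constructor
  · apply Int.le_floor.2
    rw [h2]; push_cast
    linarith
  · have h4 : (ci (k+1) x : ℝ) < 2 * (ci k x : ℝ) + 2 := by rw [h2] at hfl'; linarith
    have h5 : ((ci (k+1) x : ℤ) : ℝ) < ((2 * ci k x + 2 : ℤ) : ℝ) := by push_cast; linarith
    have : (ci (k+1) x : ℤ) < 2 * ci k x + 2 := by exact_mod_cast h5
    omega

lemma dist_coord_le {p q : ℝ × ℝ} : |p.1 - q.1| ≤ dist p q ∧ |p.2 - q.2| ≤ dist p q := by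
  rw [Prod.dist_eq]
  constructor
  · rw [← Real.dist_eq]; exact le_max_left _ _
  · rw [← Real.dist_eq]; exact le_max_right _ _

lemma dist_le_of_coord {p q : ℝ × ℝ} {c : ℝ} (h1 : |p.1 - q.1| ≤ c) (h2 : |p.2 - q.2| ≤ c) :
    dist p q ≤ c := by
  rw [Prod.dist_eq, Real.dist_eq, Real.dist_eq]
  exact max_le h1 h2

lemma cell_diam {k : ℕ} {i j : ℤ} {p q : ℝ × ℝ} (hp : p ∈ cell k i j) (hq : q ∈ cell k i j) :
    dist p q ≤ hh k := by
  obtain ⟨⟨a1, a2⟩, ⟨a3, a4⟩⟩ := hp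
  obtain ⟨⟨b1, b2⟩, ⟨b3, b4⟩⟩ := hq
  have hx : |p.1 - q.1| ≤ hh k := by
    rw [abs_le]; constructor <;> nlinarith [hh_pos k]
  have hy : |p.2 - q.2| ≤ hh k := by
    rw [abs_le]; constructor <;> nlinarith [hh_pos k]
  exact dist_le_of_coord hx hy

lemma near_indices {k : ℕ} {i j i' j' : ℤ} {p q : ℝ × ℝ}
    (hp : p ∈ cell k i j) (hq : q ∈ cell k i' j') (hd : dist p q < hh k) :
    |i - i'| ≤ 1 ∧ |j - j'| ≤ 1 := by
  rw [mem_cell_iff] at hp hq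
  have hpow : (0:ℝ) < 2^k := by positivity
  have habs : ∀ u v : ℝ, |u - v| < hh k → |u * 2^k - v * 2^k| < 1 := by
    intro u v huv
    have : |u - v| * 2^k < hh k * 2^k := mul_lt_mul_of_pos_right huv hpow
    rw [hh_mul_pow] at this
    calc |u * 2^k - v * 2^k| = |(u - v) * 2^k| := by ring_nf
    _ = |u - v| * |(2:ℝ)^k| := abs_mul _ _
    _ = |u - v| * 2^k := by rw [abs_of_pos hpow]
    _ < 1 := this
  have hx := habs p.1 q.1 (lt_of_le_of_lt (dist_coord_le (p := p) (q := q)).1 hd)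
  have hy := habs p.2 q.2 (lt_of_le_of_lt (dist_coord_le (p := p) (q := q)).2 hd)
  constructor
  · have hi1 : (i:ℝ) < (i':ℝ) + 2 := by
      have := abs_lt.1 hx
      nlinarith [hp.1.1, hq.1.2, this.2]
    have hi2 : (i':ℝ) < (i:ℝ) + 2 := by
      have := abs_lt.1 hx
      nlinarith [hq.1.1, hp.1.2, this.1]
    have e1 : i < i' + 2 := by exact_mod_cast hi1
    have e2 : i' < i + 2 := by exact_mod_cast hi2
    rw [abs_le]; omega
  · have hj1 : (j:ℝ) < (j':ℝ) + 2 := by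
      have := abs_lt.1 hy
      nlinarith [hp.2.1, hq.2.2, this.2]
    have hj2 : (j':ℝ) < (j:ℝ) + 2 := by
      have := abs_lt.1 hy
      nlinarith [hq.2.1, hp.2.2, this.1]
    have e1 : j < j' + 2 := by exact_mod_cast hj1
    have e2 : j' < j + 2 := by exact_mod_cast hj2
    rw [abs_le]; omega

lemma corner_touch {k : ℕ} {i j i' j' : ℤ} (hi : |i - i'| ≤ 1) (hj : |j - j'| ≤ 1) :
    (bdry k i j ∩ bdry k i' j').Nonempty := by
  rw [abs_le] at hi hj
  refine ⟨(((max i i' : ℤ):ℝ) * hh k, ((max j j' : ℤ):ℝ) * hh k), ?_, ?_⟩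
  · apply corner_mem
    · rcases max_cases i i' with ⟨h1, _⟩ | ⟨h1, h2⟩
      · exact Or.inl (by rw [h1])
      · have : max i i' = i + 1 := by omega
        exact Or.inr (by rw [this]; push_cast; ring)
    · rcases max_cases j j' with ⟨h1, _⟩ | ⟨h1, h2⟩
      · exact Or.inl (by rw [h1])
      · have : max j j' = j + 1 := by omega
        exact Or.inr (by rw [this]; push_cast; ring)
  · apply corner_mem
    · rcases max_cases i i' with ⟨h1, h2⟩ | ⟨h1, _⟩
      · have : max i i' = i' ∨ max i i' = i' + 1 := by omega
        rcases this with h | h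
        · exact Or.inl (by rw [h])
        · exact Or.inr (by rw [h]; push_cast; ring)
      · exact Or.inl (by rw [h1])
    · rcases max_cases j j' with ⟨h1, h2⟩ | ⟨h1, _⟩
      · have : max j j' = j' ∨ max j j' = j' + 1 := by omega
        rcases this with h | h
        · exact Or.inl (by rw [h])
        · exact Or.inr (by rw [h]; push_cast; ring)
      · exact Or.inl (by rw [h1])

lemma corner_parent {k : ℕ} {i j a b : ℤ} (ha : 2*i ≤ a ∧ a ≤ 2*i+1) (hb : 2*j ≤ b ∧ b ≤ 2*j+1) :
    (bdry k i j ∩ bdry (k+1) a b).Nonempty := by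
  have hs := hh_succ k
  have hxc : ∃ x : ℝ, (x = (i:ℝ) * hh k ∨ x = ((i:ℝ)+1) * hh k) ∧
      (x = (a:ℝ) * hh (k+1) ∨ x = ((a:ℝ)+1) * hh (k+1)) := by
    have : a = 2*i ∨ a = 2*i + 1 := by omega
    rcases this with h | h
    · exact ⟨(i:ℝ) * hh k, Or.inl rfl, Or.inl (by rw [h, hs]; push_cast; ring)⟩
    · exact ⟨((i:ℝ)+1) * hh k, Or.inr rfl, Or.inr (by rw [h, hs]; push_cast; ring)⟩
  have hyc : ∃ y : ℝ, (y = (j:ℝ) * hh k ∨ y = ((j:ℝ)+1) * hh k) ∧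
      (y = (b:ℝ) * hh (k+1) ∨ y = ((b:ℝ)+1) * hh (k+1)) := by
    have : b = 2*j ∨ b = 2*j + 1 := by omega
    rcases this with h | h
    · exact ⟨(j:ℝ) * hh k, Or.inl rfl, Or.inl (by rw [h, hs]; push_cast; ring)⟩
    · exact ⟨((j:ℝ)+1) * hh k, Or.inr rfl, Or.inr (by rw [h, hs]; push_cast; ring)⟩
  obtain ⟨x, hx1, hx2⟩ := hxc
  obtain ⟨y, hy1, hy2⟩ := hyc
  exact ⟨(x, y), corner_mem k i j hx1 hy1, corner_mem (k+1) a b hx2 hy2⟩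

section WithX

variable (X : Set (ℝ × ℝ))

def Qual (k : ℕ) (i j : ℤ) : Prop :=
  ∃ x ∈ X, |x.1 - (i:ℝ) * hh k| ≤ 20 * hh k ∧ |x.2 - (j:ℝ) * hh k| ≤ 20 * hh k

def Slev (k : ℕ) : Set (ℝ × ℝ) := ⋃ (i : ℤ) (j : ℤ) (_ : Qual X k i j), bdry k i j

def SU : Set (ℝ × ℝ) := ⋃ (k : ℕ), Slev X (k+3)

def Xp : Set (ℝ × ℝ) := X ∪ SU X

variable {X}

lemma mem_Slev {k : ℕ} {i j : ℤ} (hq : Qual X k i j) {p : ℝ × ℝ} (hp : p ∈ bdry k i j) :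
    p ∈ Slev X k := by
  exact mem_iUnion.2 ⟨i, mem_iUnion.2 ⟨j, mem_iUnion.2 ⟨hq, hp⟩⟩⟩

lemma mem_Slev_iff {k : ℕ} {p : ℝ × ℝ} :
    p ∈ Slev X k ↔ ∃ i j, Qual X k i j ∧ p ∈ bdry k i j := by
  simp [Slev]

lemma Slev_subset_SU {l : ℕ} (hl : 3 ≤ l) : Slev X l ⊆ SU X := by
  intro p hp
  exact mem_iUnion.2 ⟨l - 3, by rwa [Nat.sub_add_cancel hl]⟩

lemma subset_Xp_left : X ⊆ Xp X := subset_union_left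

lemma bdry_subset_Xp {k : ℕ} {i j : ℤ} (hk : 3 ≤ k) (hq : Qual X k i j) :
    bdry k i j ⊆ Xp X :=
  fun p hp => Or.inr (Slev_subset_SU hk (mem_Slev hq hp))

lemma qual_of_mem_cell {k : ℕ} {i j : ℤ} {x : ℝ × ℝ} (hx : x ∈ X) (hc : x ∈ cell k i j) :
    Qual X k i j := by
  obtain ⟨⟨a1, a2⟩, ⟨a3, a4⟩⟩ := hc
  have h20 : hh k ≤ 20 * hh k := by nlinarith [hh_pos k]
  refine ⟨x, hx, ?_, ?_⟩ <;> rw [abs_le] <;> constructor <;> nlinarith [hh_pos k]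

lemma qual_near {k : ℕ} {i j : ℤ} {p x : ℝ × ℝ} (hp : p ∈ cell k i j) (hx : x ∈ X)
    (hd : dist p x ≤ 2 * hh k) : Qual X k i j := by
  obtain ⟨⟨a1, a2⟩, ⟨a3, a4⟩⟩ := hp
  have h1 := (dist_coord_le (p := p) (q := x)).1
  have h2 := (dist_coord_le (p := p) (q := x)).2
  have e1 := abs_le.1 (le_trans h1 hd)
  have e2 := abs_le.1 (le_trans h2 hd)
  refine ⟨x, hx, ?_, ?_⟩ <;> rw [abs_le] <;> constructor <;> nlinarith [hh_pos k]

lemma qual_witness_dist {k : ℕ} {i j : ℤ} (hq : Qual X k i j) {z : ℝ × ℝ}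
    (hz : z ∈ cell k i j) : ∃ x ∈ X, dist z x ≤ 21 * hh k := by
  obtain ⟨x, hx, h1, h2⟩ := hq
  obtain ⟨⟨a1, a2⟩, ⟨a3, a4⟩⟩ := hz
  have e1 := abs_le.1 h1
  have e2 := abs_le.1 h2
  refine ⟨x, hx, dist_le_of_coord ?_ ?_⟩ <;> rw [abs_le] <;> constructor <;>
    nlinarith [hh_pos k]

lemma infDist_le_of_mem_Slev {l : ℕ} {z : ℝ × ℝ} (hz : z ∈ Slev X l) :
    Metric.infDist z X ≤ 21 * hh l := by
  obtain ⟨i, j, hq, hb⟩ := mem_Slev_iff.1 hz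
  obtain ⟨x, hx, hd⟩ := qual_witness_dist hq (bdry_subset_cell _ _ _ hb)
  exact le_trans (Metric.infDist_le_dist_of_mem hx) hd

lemma chain_preconn (f : ℕ → Set (ℝ × ℝ)) (t : ℕ) (hf : ∀ s, s ≤ t → IsPreconnected (f s))
    (hint : ∀ s, s + 1 ≤ t → (f s ∩ f (s+1)).Nonempty) :
    IsPreconnected (⋃ s ≤ t, f s) := by
  induction t with
  | zero => simpa using hf 0 le_rfl
  | succ n ih =>
    rw [Set.biUnion_le_succ]
    obtain ⟨c, hc1, hc2⟩ := hint n (le_refl (n+1))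
    refine IsPreconnected.union c ?_ hc2 ?_ (hf (n+1) le_rfl)
    · exact mem_iUnion₂.2 ⟨n, le_rfl, hc1⟩
    · exact ih (fun s hs => hf s (hs.trans n.le_succ)) (fun s hs => hint s (hs.trans n.le_succ))

noncomputable def Tset (x : ℝ × ℝ) (n : ℕ) : Set (ℝ × ℝ) :=
  insert x (⋃ (m : ℕ), bdry (n+m) (ci (n+m) x.1) (ci (n+m) x.2))

lemma mem_Tset_self (x : ℝ × ℝ) (n : ℕ) : x ∈ Tset x n := mem_insert _ _

lemma bdry_can_subset_Tset {x : ℝ × ℝ} {n l : ℕ} (h : n ≤ l) :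
    bdry l (ci l x.1) (ci l x.2) ⊆ Tset x n := by
  intro p hp
  refine subset_insert _ _ (mem_iUnion.2 ⟨l - n, ?_⟩)
  rwa [Nat.add_sub_cancel' h]

lemma Tset_dist {x : ℝ × ℝ} {n : ℕ} {y : ℝ × ℝ} (hy : y ∈ Tset x n) : dist y x ≤ hh n := by
  rcases hy with rfl | hy
  · simp [le_of_lt (hh_pos n)]
  · obtain ⟨m, hm⟩ := mem_iUnion.1 hy
    have := cell_diam (bdry_subset_cell _ _ _ hm) (mem_cell_ci (n+m) x)
    exact le_trans this (hh_anti (Nat.le_add_right n m))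

lemma Tset_preconn (x : ℝ × ℝ) (n : ℕ) : IsPreconnected (Tset x n) := by
  set g : ℕ → Set (ℝ × ℝ) := fun m => bdry (n+m) (ci (n+m) x.1) (ci (n+m) x.2) with hg
  have hgp : ∀ m, IsPreconnected (⋃ s ≤ m, g s) := by
    intro m
    apply chain_preconn g m (fun s _ => bdry_preconn _ _ _)
    intro s _
    have e : n + (s+1) = (n+s) + 1 := by omega
    have h1 := ci_succ (n+s) x.1
    have h2 := ci_succ (n+s) x.2
    have := corner_parent (k := n+s) (i := ci (n+s) x.1) (j := ci (n+s) x.2)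
      (a := ci ((n+s)+1) x.1) (b := ci ((n+s)+1) x.2) ⟨h1.1, h1.2⟩ ⟨h2.1, h2.2⟩
    simpa [hg, e] using this
  obtain ⟨c₀, hc₀⟩ := bdry_nonempty (n+0) (ci (n+0) x.1) (ci (n+0) x.2)
  have hU : IsPreconnected (⋃ m, g m) := by
    have : (⋃ m, g m) = ⋃₀ (Set.range (fun m => ⋃ s ≤ m, g s)) := by
      apply Set.eq_of_subset_of_subset
      · intro p hp
        obtain ⟨m, hm⟩ := mem_iUnion.1 hp
        exact ⟨⋃ s ≤ m, g s, ⟨m, rfl⟩, mem_iUnion₂.2 ⟨m, le_rfl, hm⟩⟩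
      · intro p hp
        obtain ⟨S, ⟨m, rfl⟩, hm⟩ := hp
        obtain ⟨s, _, hs⟩ := mem_iUnion₂.1 hm
        exact mem_iUnion.2 ⟨s, hs⟩
    rw [this]
    apply isPreconnected_sUnion c₀
    · rintro S ⟨m, rfl⟩
      exact mem_iUnion₂.2 ⟨0, Nat.zero_le m, hc₀⟩
    · rintro S ⟨m, rfl⟩
      exact hgp m
  apply hU.subset_closure (subset_insert _ _)
  intro p hp
  rcases hp with rfl | hp
  · rw [Metric.mem_closure_iff]
    intro ε hε
    obtain ⟨k₀, hk₀⟩ := exists_hh_lt hε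
    obtain ⟨c, hc⟩ := bdry_nonempty (n+k₀) (ci (n+k₀) p.1) (ci (n+k₀) p.2)
    refine ⟨c, mem_iUnion.2 ⟨k₀, hc⟩, ?_⟩
    have := cell_diam (mem_cell_ci (n+k₀) p) (bdry_subset_cell _ _ _ hc)
    exact lt_of_le_of_lt (le_trans this (hh_anti (Nat.le_add_left k₀ n))) hk₀
  · exact subset_closure hp

lemma Tset_subset_Xp {x : ℝ × ℝ} (hx : x ∈ X) {n : ℕ} (hn : 3 ≤ n) : Tset x n ⊆ Xp X := by
  rintro p (rfl | hp)
  · exact subset_Xp_left hx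
  · obtain ⟨m, hm⟩ := mem_iUnion.1 hp
    exact bdry_subset_Xp (le_trans hn (Nat.le_add_right n m))
      (qual_of_mem_cell hx (mem_cell_ci (n+m) x)) hm

end WithX

lemma btw_bound {m : ℕ} {c : ℝ} {u v w : ℤ} (h1 : min v w ≤ u) (h2 : u ≤ max v w)
    {B : ℝ} (hv : |c - (v:ℝ) * hh m| ≤ B) (hw : |c - (w:ℝ) * hh m| ≤ B) :
    |c - (u:ℝ) * hh m| ≤ B := by
  have hp := hh_pos m
  have l1 := abs_le.1 hv
  have l2 := abs_le.1 hw
  rcases le_total v w with hvw | hvw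
  · have e1 : (v:ℝ) ≤ (u:ℝ) := by exact_mod_cast (by omega : v ≤ u)
    have e2 : (u:ℝ) ≤ (w:ℝ) := by exact_mod_cast (by omega : u ≤ w)
    rw [abs_le]; constructor <;> nlinarith
  · have e1 : (w:ℝ) ≤ (u:ℝ) := by exact_mod_cast (by omega : w ≤ u)
    have e2 : (u:ℝ) ≤ (v:ℝ) := by exact_mod_cast (by omega : u ≤ v)
    rw [abs_le]; constructor <;> nlinarith

lemma leg_x (m : ℕ) (jf a a' : ℤ) :
    ∃ C : Set (ℝ × ℝ), IsPreconnected C ∧ bdry m a jf ⊆ C ∧ bdry m a' jf ⊆ C ∧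
      ∀ y ∈ C, ∃ i', min a a' ≤ i' ∧ i' ≤ max a a' ∧ y ∈ bdry m i' jf := by
  set lo := min a a' with hlo
  set t := (max a a' - lo).toNat with ht
  have htn : (t:ℤ) = max a a' - lo := Int.toNat_of_nonneg (by omega)
  refine ⟨⋃ s ≤ t, bdry m (lo + s) jf, ?_, ?_, ?_, ?_⟩
  · apply chain_preconn _ t (fun s _ => bdry_preconn _ _ _)
    intro s _
    have h1 : |(lo + (s:ℤ)) - (lo + ((s:ℕ)+1:ℕ))| ≤ 1 := by rw [abs_le]; push_cast; omega
    have h0 : |jf - jf| ≤ 1 := by rw [sub_self, abs_zero]; norm_num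
    have := corner_touch (k := m) h1 h0
    convert this using 3 <;> push_cast <;> ring
  · intro y hy
    refine mem_iUnion₂.2 ⟨(a - lo).toNat, by omega, ?_⟩
    have : lo + ((a - lo).toNat : ℤ) = a := by omega
    rwa [this]
  · intro y hy
    refine mem_iUnion₂.2 ⟨(a' - lo).toNat, by omega, ?_⟩
    have : lo + ((a' - lo).toNat : ℤ) = a' := by omega
    rwa [this]
  · intro y hy
    obtain ⟨s, hs, hmem⟩ := mem_iUnion₂.1 hy
    have hsz : (s:ℤ) ≤ (t:ℤ) := by exact_mod_cast hs
    exact ⟨lo + s, by omega, by omega, hmem⟩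

lemma leg_y (m : ℕ) (ifx b b' : ℤ) :
    ∃ C : Set (ℝ × ℝ), IsPreconnected C ∧ bdry m ifx b ⊆ C ∧ bdry m ifx b' ⊆ C ∧
      ∀ y ∈ C, ∃ j', min b b' ≤ j' ∧ j' ≤ max b b' ∧ y ∈ bdry m ifx j' := by
  set lo := min b b' with hlo
  set t := (max b b' - lo).toNat with ht
  have htn : (t:ℤ) = max b b' - lo := Int.toNat_of_nonneg (by omega)
  refine ⟨⋃ s ≤ t, bdry m ifx (lo + s), ?_, ?_, ?_, ?_⟩
  · apply chain_preconn _ t (fun s _ => bdry_preconn _ _ _)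
    intro s _
    have h1 : |(lo + (s:ℤ)) - (lo + ((s:ℕ)+1:ℕ))| ≤ 1 := by rw [abs_le]; push_cast; omega
    have h0 : |ifx - ifx| ≤ 1 := by rw [sub_self, abs_zero]; norm_num
    have := corner_touch (k := m) h0 h1
    convert this using 3 <;> push_cast <;> ring
  · intro y hy
    refine mem_iUnion₂.2 ⟨(b - lo).toNat, by omega, ?_⟩
    have : lo + ((b - lo).toNat : ℤ) = b := by omega
    rwa [this]
  · intro y hy
    refine mem_iUnion₂.2 ⟨(b' - lo).toNat, by omega, ?_⟩
    have : lo + ((b' - lo).toNat : ℤ) = b' := by omega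
    rwa [this]
  · intro y hy
    obtain ⟨s, hs, hmem⟩ := mem_iUnion₂.1 hy
    have hsz : (s:ℤ) ≤ (t:ℤ) := by exact_mod_cast hs
    exact ⟨lo + s, by omega, by omega, hmem⟩

lemma ci_close (m : ℕ) (c : ℝ) : |c - (ci m c : ℝ) * hh m| ≤ hh m := by
  have h1 : (ci m c : ℝ) * hh m ≤ c := le_mul_pow_iff.2 (Int.floor_le _)
  have h2 : c ≤ ((ci m c : ℝ) + 1) * hh m := by
    have : c * 2^m ≤ ((ci m c : ℝ) + 1) := (Int.lt_floor_add_one _).le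
    have e : ((ci m c : ℝ) + 1) = ((ci m c + 1 : ℤ) : ℝ) := by push_cast; ring
    rw [e]
    exact mul_pow_le_iff.2 (by rw [← e]; exact this)
  rw [abs_le]
  constructor <;> nlinarith [hh_pos m]

lemma walk (m : ℕ) (a b : ℤ) {x : ℝ × ℝ}
    (h1 : |x.1 - (a:ℝ) * hh m| ≤ 20 * hh m) (h2 : |x.2 - (b:ℝ) * hh m| ≤ 20 * hh m) :
    ∃ C : Set (ℝ × ℝ), IsPreconnected C ∧ bdry m a b ⊆ C ∧
      bdry m (ci m x.1) (ci m x.2) ⊆ C ∧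
      ∀ y ∈ C, ∃ i' j' : ℤ, (|x.1 - (i':ℝ) * hh m| ≤ 20 * hh m ∧ |x.2 - (j':ℝ) * hh m| ≤ 20 * hh m)
        ∧ y ∈ bdry m i' j' := by
  have h20 : hh m ≤ 20 * hh m := by nlinarith [hh_pos m]
  have hca : |x.1 - (ci m x.1 : ℝ) * hh m| ≤ 20 * hh m := le_trans (ci_close m x.1) h20
  have hcb : |x.2 - (ci m x.2 : ℝ) * hh m| ≤ 20 * hh m := le_trans (ci_close m x.2) h20
  obtain ⟨C1, hC1p, hC1a, hC1b, hC1m⟩ := leg_x m b a (ci m x.1)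
  obtain ⟨C2, hC2p, hC2a, hC2b, hC2m⟩ := leg_y m (ci m x.1) b (ci m x.2)
  obtain ⟨c, hc⟩ := bdry_nonempty m (ci m x.1) b
  refine ⟨C1 ∪ C2, IsPreconnected.union c (hC1b hc) (hC2a hc) hC1p hC2p,
    fun y hy => Or.inl (hC1a hy), fun y hy => Or.inr (hC2b hy), ?_⟩
  rintro y (hy | hy)
  · obtain ⟨i', hi1, hi2, hmem⟩ := hC1m y hy
    exact ⟨i', b, ⟨btw_bound hi1 hi2 h1 hca, h2⟩, hmem⟩
  · obtain ⟨j', hj1, hj2, hmem⟩ := hC2m y hy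
    exact ⟨ci m x.1, j', ⟨hca, btw_bound hj1 hj2 h2 hcb⟩, hmem⟩

lemma preconn_of_connectors {U : Set (ℝ × ℝ)} {x₀ : ℝ × ℝ} (hx₀ : x₀ ∈ U)
    (h : ∀ p ∈ U, ∃ W, W ⊆ U ∧ IsPreconnected W ∧ p ∈ W ∧ x₀ ∈ W) : IsPreconnected U := by
  have hU : U = ⋃₀ {W | W ⊆ U ∧ IsPreconnected W ∧ x₀ ∈ W} := by
    apply Set.eq_of_subset_of_subset
    · intro p hp
      obtain ⟨W, h1, h2, h3, h4⟩ := h p hp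
      exact ⟨W, ⟨h1, h2, h4⟩, h3⟩
    · intro p hp
      obtain ⟨W, ⟨h1, _, _⟩, hW⟩ := hp
      exact h1 hW
  rw [hU]
  exact isPreconnected_sUnion x₀ _ (fun s hs => hs.2.2) (fun s hs => hs.2.1)

lemma qual_pairs_finite {X : Set (ℝ × ℝ)} (hXb : Bornology.IsBounded X) (k : ℕ) :
    {ij : ℤ × ℤ | Qual X k ij.1 ij.2}.Finite := by
  obtain ⟨B, hB⟩ := hXb.subset_closedBall 0
  set c : ℤ := ⌈(B + 20 * hh k) * 2^k⌉ with hc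
  apply Set.Finite.subset (Set.finite_Icc (-c, -c) (c, c))
  rintro ⟨i, j⟩ ⟨x, hx, h1, h2⟩
  have hd : dist x 0 ≤ B := hB hx
  have hx1 : |x.1| ≤ B := by
    have := (dist_coord_le (p := x) (q := 0)).1
    simpa using le_trans this hd
  have hx2 : |x.2| ≤ B := by
    have := (dist_coord_le (p := x) (q := 0)).2
    simpa using le_trans this hd
  have hpow : (0:ℝ) < 2^k := by positivity
  have hhp := hh_pos k
  have hhm := hh_mul_pow k
  have hcB : (B + 20 * hh k) * 2^k ≤ (c:ℝ) := Int.le_ceil _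
  have key : ∀ a : ℤ, ∀ u : ℝ, |u| ≤ B → |u - (a:ℝ) * hh k| ≤ 20 * hh k → -c ≤ a ∧ a ≤ c := by
    intro a u hu ha
    have l1 := abs_le.1 hu
    have l2 := abs_le.1 ha
    have hup : (a:ℝ) * hh k ≤ u + 20 * hh k := by linarith
    have hlo : u - 20 * hh k ≤ (a:ℝ) * hh k := by linarith
    have hup2 : (a:ℝ) ≤ (B + 20 * hh k) * 2^k := by
      have : (a:ℝ) * hh k * 2^k ≤ (B + 20 * hh k) * 2^k := by
        apply mul_le_mul_of_nonneg_right _ hpow.le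
        linarith
      rwa [mul_assoc, hhm, mul_one] at this
    have hlo2 : -((B + 20 * hh k) * 2^k) ≤ (a:ℝ) := by
      have : (-(B + 20 * hh k)) * 2^k ≤ (a:ℝ) * hh k * 2^k := by
        apply mul_le_mul_of_nonneg_right _ hpow.le
        nlinarith
      rw [mul_assoc, hhm, mul_one] at this
      nlinarith
    constructor
    · have : ((-c : ℤ) : ℝ) ≤ (a:ℝ) := by push_cast; linarith
      exact_mod_cast this
    · have : (a:ℝ) ≤ (c:ℝ) := le_trans hup2 hcB
      exact_mod_cast this
  obtain ⟨e1, e2⟩ := key i x.1 hx1 h1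
  obtain ⟨e3, e4⟩ := key j x.2 hx2 h2
  constructor <;> constructor <;> simp_all

lemma Slev_eq_biUnion {X : Set (ℝ × ℝ)} (k : ℕ) :
    Slev X k = ⋃ ij ∈ {ij : ℤ × ℤ | Qual X k ij.1 ij.2}, bdry k ij.1 ij.2 := by
  apply Set.eq_of_subset_of_subset
  · intro p hp
    obtain ⟨i, j, hq, hb⟩ := mem_Slev_iff.1 hp
    exact mem_iUnion₂.2 ⟨(i, j), hq, hb⟩
  · intro p hp
    obtain ⟨⟨i, j⟩, hq, hb⟩ := mem_iUnion₂.1 hp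
    exact mem_Slev (by exact hq) hb

lemma Slev_closed {X : Set (ℝ × ℝ)} (hXb : Bornology.IsBounded X) (k : ℕ) :
    IsClosed (Slev X k) := by
  rw [Slev_eq_biUnion]
  exact (qual_pairs_finite hXb k).isClosed_biUnion fun ij _ => bdry_closed k ij.1 ij.2

lemma Xp_bounded {X : Set (ℝ × ℝ)} (hXb : Bornology.IsBounded X) :
    Bornology.IsBounded (Xp X) := by
  obtain ⟨B, hB⟩ := hXb.subset_closedBall 0
  apply Bornology.IsBounded.subset (Metric.isBounded_closedBall (x := (0:ℝ×ℝ)) (r := B + 21))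
  rintro p (hp | hp)
  · exact Metric.closedBall_subset_closedBall (by norm_num) (hB hp)
  · obtain ⟨l, hl⟩ := mem_iUnion.1 hp
    obtain ⟨i, j, hq, hb⟩ := mem_Slev_iff.1 hl
    obtain ⟨x, hx, hd⟩ := qual_witness_dist hq (bdry_subset_cell _ _ _ hb)
    have h1 : dist x 0 ≤ B := hB hx
    have : dist p (0:ℝ×ℝ) ≤ dist p x + dist x 0 := dist_triangle _ _ _
    have h21 : 21 * hh (l+3) ≤ 21 := by nlinarith [hh_le_one (l+3), hh_pos (l+3)]
    simp only [Metric.mem_closedBall]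
    linarith [hd, h1, this]

lemma coarse_structure {X : Set (ℝ × ℝ)} (hXne : X.Nonempty) (hXcl : IsClosed X)
    (hXb : Bornology.IsBounded X) {z : ℝ × ℝ} (hz : z ∉ X) :
    ∃ (I : Set (ℕ × ℤ × ℤ)), I.Finite ∧
      (∀ kij ∈ I, 3 ≤ kij.1 ∧ Qual X kij.1 kij.2.1 kij.2.2) ∧
      (∀ q ∈ Xp X, dist q z < Metric.infDist z X / 2 →
        ∃ kij ∈ I, q ∈ bdry kij.1 kij.2.1 kij.2.2) := by
  have hd : 0 < Metric.infDist z X := (hXcl.notMem_iff_infDist_pos hXne).1 hz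
  set d := Metric.infDist z X with hdd
  obtain ⟨k1, hk1⟩ := exists_hh_lt (show 0 < d / 42 by linarith)
  set K₀ := max k1 3 with hK
  have hK3 : 3 ≤ K₀ := le_max_right _ _
  have hKd : 21 * hh K₀ < d / 2 := by
    have := hh_anti (le_max_left k1 3)
    nlinarith [hh_pos K₀]
  refine ⟨{kij | 3 ≤ kij.1 ∧ kij.1 ≤ K₀ ∧ Qual X kij.1 kij.2.1 kij.2.2}, ?_, ?_, ?_⟩
  · apply Set.Finite.subset (Set.Finite.biUnion (Set.finite_Icc 3 K₀)
      (fun k _ => ((qual_pairs_finite hXb k).image (fun ij => (k, ij)))))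
    rintro ⟨k, i, j⟩ ⟨h1, h2, h3⟩
    exact mem_iUnion₂.2 ⟨k, mem_Icc.2 ⟨h1, h2⟩, ⟨(i, j), h3, rfl⟩⟩
  · rintro ⟨k, i, j⟩ ⟨h1, _, h3⟩
    exact ⟨h1, h3⟩
  · intro q hq hdq
    rcases hq with hq | hq
    · exfalso
      have : d ≤ dist z q := Metric.infDist_le_dist_of_mem hq
      rw [dist_comm] at this
      linarith
    · obtain ⟨l, hl⟩ := mem_iUnion.1 hq
      obtain ⟨i, j, hqu, hb⟩ := mem_Slev_iff.1 hl
      have hinf : Metric.infDist q X ≤ 21 * hh (l+3) := infDist_le_of_mem_Slev hl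
      have hinf2 : d ≤ Metric.infDist q X + dist z q := Metric.infDist_le_infDist_add_dist
      rw [dist_comm] at hdq
      have hlow : d / 2 ≤ Metric.infDist q X := by linarith
      have hlK : l + 3 ≤ K₀ := by
        by_contra hcon
        push_neg at hcon
        have := hh_anti (le_of_lt hcon)
        nlinarith
      exact ⟨(l+3, i, j), ⟨by omega, hlK, hqu⟩, hb⟩

lemma Xp_closed {X : Set (ℝ × ℝ)} (hXne : X.Nonempty) (hXcl : IsClosed X)
    (hXb : Bornology.IsBounded X) : IsClosed (Xp X) := by
  rw [← isOpen_compl_iff]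
  rw [Metric.isOpen_iff]
  intro p hp
  have hpX : p ∉ X := fun h => hp (subset_Xp_left h)
  obtain ⟨I, hIf, hIq, hIc⟩ := coarse_structure hXne hXcl hXb hpX
  have hd : 0 < Metric.infDist p X := (hXcl.notMem_iff_infDist_pos hXne).1 hpX
  set G := ⋃ kij ∈ I, bdry kij.1 kij.2.1 kij.2.2 with hG
  have hGc : IsClosed G := hIf.isClosed_biUnion fun kij _ => bdry_closed _ _ _
  have hpG : p ∉ G := by
    intro hcon
    obtain ⟨kij, hk1, hk2⟩ := mem_iUnion₂.1 hcon
    exact hp (bdry_subset_Xp (hIq kij hk1).1 (hIq kij hk1).2 hk2)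
  obtain ⟨r1, hr1, hball⟩ := Metric.isOpen_iff.1 hGc.isOpen_compl p hpG
  refine ⟨min r1 (Metric.infDist p X / 2), by positivity, ?_⟩
  intro q hq
  simp only [Metric.mem_ball] at hq
  intro hqXp
  have hq1 : dist q p < r1 := lt_of_lt_of_le hq (min_le_left _ _)
  have hq2 : dist q p < Metric.infDist p X / 2 := lt_of_lt_of_le hq (min_le_right _ _)
  obtain ⟨kij, hk1, hk2⟩ := hIc q hqXp hq2
  exact (hball (Metric.mem_ball.2 hq1)) (mem_iUnion₂.2 ⟨kij, hk1, hk2⟩)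

lemma Xp_compact {X : Set (ℝ × ℝ)} (hXne : X.Nonempty) (hXc : IsCompact X) :
    IsCompact (Xp X) :=
  Metric.isCompact_of_isClosed_isBounded
    (Xp_closed hXne hXc.isClosed hXc.isBounded) (Xp_bounded hXc.isBounded)

lemma Xp_connected {X : Set (ℝ × ℝ)} (hXne : X.Nonempty) (hXconn : IsPreconnected X) :
    IsConnected (Xp X) := by
  obtain ⟨x₀, hx₀⟩ := hXne
  refine ⟨⟨x₀, subset_Xp_left hx₀⟩, ?_⟩
  apply preconn_of_connectors (subset_Xp_left hx₀)
  rintro p (hp | hp)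
  · exact ⟨X, subset_Xp_left, hXconn, hp, hx₀⟩
  · obtain ⟨k, hk⟩ := mem_iUnion.1 hp
    obtain ⟨i, j, hq, hb⟩ := mem_Slev_iff.1 hk
    set m := k + 3 with hm
    have hm3 : 3 ≤ m := by omega
    obtain ⟨xw, hxw, h1, h2⟩ := hq
    obtain ⟨C, hCp, hCa, hCb, hCm⟩ := walk m i j h1 h2
    have hCXp : C ⊆ Xp X := by
      intro y hy
      obtain ⟨i', j', ⟨e1, e2⟩, hmem⟩ := hCm y hy
      exact bdry_subset_Xp hm3 ⟨xw, hxw, e1, e2⟩ hmem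
    obtain ⟨c, hc⟩ := bdry_nonempty m (ci m xw.1) (ci m xw.2)
    refine ⟨X ∪ (C ∪ Tset xw m), ?_, ?_, ?_, ?_⟩
    · rintro y (hy | (hy | hy))
      · exact subset_Xp_left hy
      · exact hCXp hy
      · exact Tset_subset_Xp hxw hm3 hy
    · apply IsPreconnected.union xw hxw
        (Or.inr (mem_Tset_self xw m)) hXconn
      exact IsPreconnected.union c (hCb hc) (bdry_can_subset_Tset le_rfl hc) hCp
        (Tset_preconn xw m)
    · exact Or.inr (Or.inl (hCa hb))
    · exact Or.inl hx₀

lemma cell_witness_dist {k : ℕ} {i j : ℤ} {z x : ℝ × ℝ} (hz : z ∈ cell k i j)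
    (e1 : |x.1 - (i:ℝ) * hh k| ≤ 20 * hh k) (e2 : |x.2 - (j:ℝ) * hh k| ≤ 20 * hh k) :
    dist z x ≤ 21 * hh k := by
  obtain ⟨⟨a1, a2⟩, ⟨a3, a4⟩⟩ := hz
  have l1 := abs_le.1 e1
  have l2 := abs_le.1 e2
  refine dist_le_of_coord ?_ ?_ <;> rw [abs_le] <;> constructor <;> nlinarith [hh_pos k]

lemma bdry_dyadic {l : ℕ} {i j : ℤ} {q : ℝ × ℝ} (hq : q ∈ bdry l i j) :
    ∃ n : ℤ, q.1 = (n:ℝ) * hh l ∨ q.2 = (n:ℝ) * hh l := by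
  obtain ⟨t, ht⟩ := mem_iUnion.1 hq
  fin_cases t
  · exact ⟨i, Or.inl (by simpa using ht.1)⟩
  · exact ⟨i + 1, Or.inl (by push_cast; simpa using ht.1)⟩
  · exact ⟨j, Or.inr (by simpa using ht.2)⟩
  · exact ⟨j + 1, Or.inr (by push_cast; simpa using ht.2)⟩

lemma hh_factor {l N : ℕ} (h : l ≤ N) : hh l = ((2^(N-l) : ℤ) : ℝ) * hh N := by
  have hsplit : (1/2 : ℝ)^N = (1/2:ℝ)^l * (1/2:ℝ)^(N-l) := by
    rw [← pow_add]
    congr 1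
    omega
  have h2 : ((2:ℝ))^(N-l) * (1/2:ℝ)^(N-l) = 1 := by
    rw [← mul_pow]
    norm_num
  rw [hh, hh, hsplit]
  push_cast
  rw [show (2:ℝ)^(N-l) * ((1/2:ℝ)^l * (1/2:ℝ)^(N-l))
    = ((2:ℝ)^(N-l) * (1/2:ℝ)^(N-l)) * (1/2:ℝ)^l from by ring, h2, one_mul]

lemma dyadic_mem_bdry {l N : ℕ} (hlN : l ≤ N) {n : ℤ} {q : ℝ × ℝ}
    (hq1 : q.1 = (n:ℝ) * hh l ∨ q.2 = (n:ℝ) * hh l) {a b : ℤ} (hc : q ∈ cell N a b) :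
    q ∈ bdry N a b := by
  have hfac := hh_factor hlN
  have hp := hh_pos N
  obtain ⟨⟨c1, c2⟩, ⟨c3, c4⟩⟩ := hc
  rcases hq1 with hq1 | hq1
  · set n' : ℤ := n * 2^(N-l) with hn'
    have hcast : ((n' : ℤ) : ℝ) = (n:ℝ) * ((2^(N-l) : ℤ) : ℝ) := by rw [hn']; push_cast; ring
    have hq1' : q.1 = (n':ℝ) * hh N := by rw [hq1, hfac, hcast]; ring
    have e1 : (a:ℝ) ≤ (n':ℝ) := by
      rw [hq1'] at c1
      exact le_of_mul_le_mul_right (by linarith) hp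
    have e2 : (n':ℝ) ≤ (a:ℝ) + 1 := by
      rw [hq1'] at c2
      exact le_of_mul_le_mul_right (by nlinarith) hp
    have e1' : a ≤ n' := by exact_mod_cast e1
    have e2' : n' ≤ a + 1 := by exact_mod_cast e2
    have : n' = a ∨ n' = a + 1 := by omega
    rcases this with rfl | h
    · exact mem_iUnion.2 ⟨0, ⟨by simpa using hq1', ⟨c3, c4⟩⟩⟩
    · refine mem_iUnion.2 ⟨1, ⟨?_, ⟨c3, c4⟩⟩⟩
      simp only [mem_singleton_iff]
      rw [hq1', h]
      push_cast
      ring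
  · set n' : ℤ := n * 2^(N-l) with hn'
    have hcast : ((n' : ℤ) : ℝ) = (n:ℝ) * ((2^(N-l) : ℤ) : ℝ) := by rw [hn']; push_cast; ring
    have hq1' : q.2 = (n':ℝ) * hh N := by rw [hq1, hfac, hcast]; ring
    have e1 : (b:ℝ) ≤ (n':ℝ) := by
      rw [hq1'] at c3
      exact le_of_mul_le_mul_right (by linarith) hp
    have e2 : (n':ℝ) ≤ (b:ℝ) + 1 := by
      rw [hq1'] at c4
      exact le_of_mul_le_mul_right (by nlinarith) hp
    have e1' : b ≤ n' := by exact_mod_cast e1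
    have e2' : n' ≤ b + 1 := by exact_mod_cast e2
    have : n' = b ∨ n' = b + 1 := by omega
    rcases this with rfl | h
    · exact mem_iUnion.2 ⟨2, ⟨⟨c1, c2⟩, by simpa using hq1'⟩⟩
    · refine mem_iUnion.2 ⟨3, ⟨⟨c1, c2⟩, ?_⟩⟩
      simp only [mem_singleton_iff]
      rw [hq1', h]
      push_cast
      ring

lemma touch_Tsets {u v : ℝ × ℝ} {M : ℕ} (hd : dist u v < hh M) :
    ∃ c, c ∈ bdry M (ci M u.1) (ci M u.2) ∩ bdry M (ci M v.1) (ci M v.2) := by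
  have hn := near_indices (mem_cell_ci M u) (mem_cell_ci M v) hd
  obtain ⟨c, hc⟩ := corner_touch (k := M) hn.1 hn.2
  exact ⟨c, hc⟩

lemma lc_crit {X : Set (ℝ × ℝ)} (hXne : X.Nonempty) (hXcl : IsClosed X)
    (hXb : Bornology.IsBounded X) :
    ∀ p ∈ Xp X, ∀ ε > 0, ∃ δ > 0, ∀ q ∈ Xp X, dist q p < δ →
      ∃ P, IsPreconnected P ∧ P ⊆ Xp X ∧ p ∈ P ∧ q ∈ P ∧ ∀ y ∈ P, dist y p < ε := by
  intro p hp ε hε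
  rcases em (p ∈ X) with hpX | hpX
  · -- p ∈ X
    obtain ⟨k2, hk2⟩ := exists_hh_lt (show 0 < ε / 100 by linarith)
    set M := max k2 3 with hM
    have hM3 : 3 ≤ M := le_max_right _ _
    have hMε : 100 * hh M < ε := by
      have := hh_anti (le_max_left k2 3)
      nlinarith [hh_pos M]
    set N := M + 5 with hN
    have hN3 : 3 ≤ N := by omega
    have hNM : hh N ≤ hh M := hh_anti (by omega)
    have hNM32 : 32 * hh N = hh M := by
      have : hh M = 2^5 * hh N := by
        rw [hh_factor (show M ≤ N by omega)]
        norm_num [hN]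
      rw [this]; norm_num
    refine ⟨hh N, hh_pos N, ?_⟩
    intro q hq hdq
    rcases hq with hqX | hqSU
    · -- q ∈ X : connect canonical towers
      obtain ⟨c, hc1, hc2⟩ := touch_Tsets (M := N) hdq
      refine ⟨Tset q N ∪ Tset p N, ?_, ?_, Or.inr (mem_Tset_self p N),
        Or.inl (mem_Tset_self q N), ?_⟩
      · exact IsPreconnected.union c (bdry_can_subset_Tset le_rfl hc1)
          (bdry_can_subset_Tset le_rfl hc2) (Tset_preconn q N) (Tset_preconn p N)
      · rintro y (hy | hy)
        · exact Tset_subset_Xp hqX hN3 hy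
        · exact Tset_subset_Xp hpX hN3 hy
      · rintro y (hy | hy)
        · have h1 := Tset_dist hy
          calc dist y p ≤ dist y q + dist q p := dist_triangle _ _ _
          _ < hh N + hh N := by linarith [Tset_dist hy]
          _ < ε := by nlinarith [hh_pos N]
        · have := Tset_dist hy
          calc dist y p ≤ hh N := this
          _ < ε := by nlinarith [hh_pos N, hh_pos M]
    · -- q ∈ SU
      obtain ⟨k, hk⟩ := mem_iUnion.1 hqSU
      obtain ⟨i, j, hqu, hb⟩ := mem_Slev_iff.1 hk
      set l := k + 3 with hl
      have hl3 : 3 ≤ l := by omega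
      rcases le_or_gt l N with hlN | hlN
      · -- coarse: q is on a dyadic line of level l ≤ N
        obtain ⟨n, hn⟩ := bdry_dyadic hb
        have hqcell := mem_cell_ci N q
        have hqbd : q ∈ bdry N (ci N q.1) (ci N q.2) := dyadic_mem_bdry hlN hn hqcell
        have hRqual : Qual X N (ci N q.1) (ci N q.2) :=
          qual_near hqcell hpX (by rw [dist_comm] at hdq ⊢; exact le_of_lt (by nlinarith [hh_pos N, hdq]))
        obtain ⟨c, hc1, hc2⟩ := touch_Tsets (M := N) hdq
        refine ⟨bdry N (ci N q.1) (ci N q.2) ∪ Tset p N, ?_, ?_,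
          Or.inr (mem_Tset_self p N), Or.inl hqbd, ?_⟩
        · exact IsPreconnected.union c hc1 (bdry_can_subset_Tset le_rfl hc2)
            (bdry_preconn _ _ _) (Tset_preconn p N)
        · rintro y (hy | hy)
          · exact bdry_subset_Xp hN3 hRqual hy
          · exact Tset_subset_Xp hpX hN3 hy
        · rintro y (hy | hy)
          · have h1 : dist y q ≤ hh N := cell_diam (bdry_subset_cell _ _ _ hy) hqcell
            calc dist y p ≤ dist y q + dist q p := dist_triangle _ _ _
            _ < hh N + hh N := by linarith
            _ < ε := by nlinarith [hh_pos N]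
          · calc dist y p ≤ hh N := Tset_dist hy
            _ < ε := by nlinarith [hh_pos N, hh_pos M]
      · -- fine: N < l
        obtain ⟨xw, hxw, h1, h2⟩ := hqu
        obtain ⟨C, hCp, hCa, hCb, hCm⟩ := walk l i j h1 h2
        have hCXp : C ⊆ Xp X := by
          intro y hy
          obtain ⟨i', j', ⟨e1, e2⟩, hmem⟩ := hCm y hy
          exact bdry_subset_Xp hl3 ⟨xw, hxw, e1, e2⟩ hmem
        have hCd : ∀ y ∈ C, dist y xw ≤ 21 * hh l := by
          intro y hy
          obtain ⟨i', j', ⟨e1, e2⟩, hmem⟩ := hCm y hy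
          exact cell_witness_dist (bdry_subset_cell _ _ _ hmem) e1 e2
        have hqxw : dist q xw ≤ 21 * hh l :=
          cell_witness_dist (bdry_subset_cell _ _ _ hb) h1 h2
        have hll : hh l ≤ hh (N+1) := hh_anti (by omega)
        have hN1 : 2 * hh (N+1) = hh N := by
          rw [hh_succ N]
        have hxwp : dist xw p < hh M := by
          calc dist xw p ≤ dist xw q + dist q p := dist_triangle _ _ _
          _ < 21 * hh l + hh N := by rw [dist_comm] at hqxw; linarith
          _ ≤ 21 * hh (N+1) + hh N := by linarith
          _ < hh M := by nlinarith [hh_pos N, hh_pos (N+1)]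
        obtain ⟨c, hc1, hc2⟩ := touch_Tsets (M := M) hxwp
        refine ⟨C ∪ (Tset xw M ∪ Tset p M), ?_, ?_, ?_, Or.inl (hCa hb), ?_⟩
        · obtain ⟨c', hc'⟩ := bdry_nonempty l (ci l xw.1) (ci l xw.2)
          have hTT : IsPreconnected (Tset xw M ∪ Tset p M) :=
            IsPreconnected.union c (bdry_can_subset_Tset le_rfl hc1)
              (bdry_can_subset_Tset le_rfl hc2) (Tset_preconn xw M) (Tset_preconn p M)
          exact IsPreconnected.union c' (hCb hc')
            (Or.inl (bdry_can_subset_Tset (by omega) hc')) hCp hTT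
        · rintro y (hy | (hy | hy))
          · exact hCXp hy
          · exact Tset_subset_Xp hxw hM3 hy
          · exact Tset_subset_Xp hpX hM3 hy
        · exact Or.inr (Or.inr (mem_Tset_self p M))
        · rintro y (hy | (hy | hy))
          · have := hCd y hy
            calc dist y p ≤ dist y xw + dist xw p := dist_triangle _ _ _
            _ < 21 * hh l + hh M := by linarith
            _ ≤ 21 * hh (N+1) + hh M := by linarith
            _ < ε := by nlinarith [hh_pos (N+1), hh_pos M, hh_pos N]
          · have := Tset_dist hy
            calc dist y p ≤ dist y xw + dist xw p := dist_triangle _ _ _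
            _ < hh M + hh M := by linarith
            _ < ε := by nlinarith [hh_pos M]
          · calc dist y p ≤ hh M := Tset_dist hy
            _ < ε := by nlinarith [hh_pos M]
  · -- p ∉ X : locally a finite union of edges through p
    obtain ⟨I, hIf, hIq, hIc⟩ := coarse_structure hXne hXcl hXb hpX
    have hd : 0 < Metric.infDist p X := (hXcl.notMem_iff_infDist_pos hXne).1 hpX
    set G2 := ⋃ e ∈ {e : (ℕ × ℤ × ℤ) × Fin 4 | e.1 ∈ I ∧ p ∉ edge e.1.1 e.1.2.1 e.1.2.2 e.2},
      edge e.1.1 e.1.2.1 e.1.2.2 e.2 with hG2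
    have hG2f : {e : (ℕ × ℤ × ℤ) × Fin 4 | e.1 ∈ I ∧ p ∉ edge e.1.1 e.1.2.1 e.1.2.2 e.2}.Finite := by
      apply Set.Finite.subset (hIf.prod (Set.finite_univ (α := Fin 4)))
      rintro ⟨kij, t⟩ ⟨h1, _⟩
      exact ⟨h1, trivial⟩
    have hG2c : IsClosed G2 := hG2f.isClosed_biUnion fun e _ => edge_closed _ _ _ _
    have hpG2 : p ∉ G2 := by
      intro hcon
      obtain ⟨e, he1, he2⟩ := mem_iUnion₂.1 hcon
      exact he1.2 he2
    obtain ⟨r2, hr2, hball⟩ := Metric.isOpen_iff.1 hG2c.isOpen_compl p hpG2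
    refine ⟨min r2 (min (Metric.infDist p X / 2) ε), by positivity, ?_⟩
    intro q hq hdq
    have hd1 : dist q p < r2 := lt_of_lt_of_le hdq (min_le_left _ _)
    have hd2 : dist q p < Metric.infDist p X / 2 :=
      lt_of_lt_of_le hdq (le_trans (min_le_right _ _) (min_le_left _ _))
    have hd3 : dist q p < ε := lt_of_lt_of_le hdq (le_trans (min_le_right _ _) (min_le_right _ _))
    obtain ⟨kij, hk1, hk2⟩ := hIc q hq hd2
    obtain ⟨t, ht⟩ := mem_iUnion.1 hk2
    have hpe : p ∈ edge kij.1 kij.2.1 kij.2.2 t := by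
      by_contra hcon
      have : q ∈ G2 := mem_iUnion₂.2 ⟨(kij, t), ⟨hk1, hcon⟩, ht⟩
      exact (hball (Metric.mem_ball.2 hd1)) this
    have hconv := edge_convex kij.1 kij.2.1 kij.2.2 t
    refine ⟨segment ℝ p q, (convex_segment p q).isPreconnected, ?_, left_mem_segment ℝ p q,
      right_mem_segment ℝ p q, ?_⟩
    · intro y hy
      have : y ∈ edge kij.1 kij.2.1 kij.2.2 t := hconv.segment_subset hpe ht hy
      exact bdry_subset_Xp (hIq kij hk1).1 (hIq kij hk1).2 (mem_iUnion.2 ⟨t, this⟩)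
    · intro y hy
      have hsub : segment ℝ p q ⊆ Metric.ball p ε :=
        (convex_ball p ε).segment_subset (Metric.mem_ball_self hε)
          (by rwa [Metric.mem_ball])
      have := hsub hy
      rwa [Metric.mem_ball] at this

lemma Xp_locallyConnected {X : Set (ℝ × ℝ)} (hXne : X.Nonempty) (hXcl : IsClosed X)
    (hXb : Bornology.IsBounded X) : LocallyConnectedSpace (Xp X) := by
  rw [locallyConnectedSpace_iff_connected_subsets]
  intro x U hU
  obtain ⟨ε, hε, hballU⟩ := Metric.mem_nhds_iff.1 hU
  obtain ⟨δ, hδ, hcrit⟩ := lc_crit hXne hXcl hXb x.val x.2 ε hε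
  classical
  choose P hP1 hP2 hP3 hP4 hP5 using hcrit
  set W : Set (ℝ × ℝ) :=
    ⋃ (q : ℝ × ℝ) (hq : q ∈ Xp X) (hd : dist q x.val < δ), P q hq hd with hW
  have hWXp : W ⊆ Xp X := by
    intro y hy
    simp only [hW, mem_iUnion] at hy
    obtain ⟨q, hq, hd, hy⟩ := hy
    exact hP2 q hq hd hy
  have hWpre : IsPreconnected W := by
    have : W = ⋃₀ {S | ∃ q hq hd, S = P q hq hd} := by
      apply Set.eq_of_subset_of_subset
      · intro y hy
        simp only [hW, mem_iUnion] at hy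
        obtain ⟨q, hq, hd, hy⟩ := hy
        exact ⟨P q hq hd, ⟨q, hq, hd, rfl⟩, hy⟩
      · rintro y ⟨S, ⟨q, hq, hd, rfl⟩, hy⟩
        simp only [hW, mem_iUnion]
        exact ⟨q, hq, hd, hy⟩
    rw [this]
    apply isPreconnected_sUnion x.val
    · rintro S ⟨q, hq, hd, rfl⟩
      exact hP3 q hq hd
    · rintro S ⟨q, hq, hd, rfl⟩
      exact hP1 q hq hd
  set V : Set (Xp X) := Subtype.val ⁻¹' W with hV
  refine ⟨V, ?_, ?_, ?_⟩
  · apply Filter.mem_of_superset (Metric.ball_mem_nhds x hδ)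
    intro y hy
    rw [Metric.mem_ball, Subtype.dist_eq] at hy
    have : y.val ∈ P y.val y.2 hy := hP4 y.val y.2 hy
    simp only [hV, mem_preimage, hW, mem_iUnion]
    exact ⟨y.val, y.2, hy, this⟩
  · rw [← Topology.IsInducing.subtypeVal.isPreconnected_image]
    have himg : Subtype.val '' V = W := by
      rw [hV, Subtype.image_preimage_coe]
      exact inter_eq_self_of_subset_right hWXp
    rwa [himg]
  · intro y hy
    simp only [hV, mem_preimage, hW, mem_iUnion] at hy
    obtain ⟨q, hq, hd, hy⟩ := hy
    have : dist y.val x.val < ε := hP5 q hq hd y.val hy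
    apply hballU
    rw [Metric.mem_ball, Subtype.dist_eq]
    exact this

noncomputable def lineMap (e : (ℕ × ℤ × ℤ) × Fin 4) (r : ℝ) : ℝ × ℝ :=
  if e.2.val ≤ 1
  then ((if e.2.val = 0 then (e.1.2.1 : ℝ) else (e.1.2.1 : ℝ) + 1) * hh e.1.1, r)
  else (r, (if e.2.val = 2 then (e.1.2.2 : ℝ) else (e.1.2.2 : ℝ) + 1) * hh e.1.1)

noncomputable def zcoord (e : (ℕ × ℤ × ℤ) × Fin 4) (z : ℝ × ℝ) : ℝ :=
  if e.2.val ≤ 1 then z.2 else z.1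

def Me (K : Set (ℝ × ℝ)) (e : (ℕ × ℤ × ℤ) × Fin 4) : Set ℝ := lineMap e ⁻¹' K

lemma lineMap_eq (e : (ℕ × ℤ × ℤ) × Fin 4) : lineMap e = fun r =>
    if e.2.val ≤ 1
    then ((if e.2.val = 0 then (e.1.2.1 : ℝ) else (e.1.2.1 : ℝ) + 1) * hh e.1.1, r)
    else (r, (if e.2.val = 2 then (e.1.2.2 : ℝ) else (e.1.2.2 : ℝ) + 1) * hh e.1.1) := rfl

lemma lineMap_continuous (e : (ℕ × ℤ × ℤ) × Fin 4) : Continuous (lineMap e) := by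
  rw [lineMap_eq]
  by_cases h : e.2.val ≤ 1
  · simp only [if_pos h]
    exact continuous_const.prodMk continuous_id
  · simp only [if_neg h]
    exact continuous_id.prodMk continuous_const

lemma mem_edge_lineMap {k : ℕ} {i j : ℤ} {t : Fin 4} {w : ℝ × ℝ}
    (hw : w ∈ edge k i j t) : ∃ r : ℝ, w = lineMap ((k, i, j), t) r := by
  fin_cases t
  · obtain ⟨h1, _⟩ := hw
    simp only [mem_singleton_iff] at h1
    exact ⟨w.2, by simp [lineMap, Prod.ext_iff, h1]⟩
  · obtain ⟨h1, _⟩ := hw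
    simp only [mem_singleton_iff] at h1
    exact ⟨w.2, by simp [lineMap, Prod.ext_iff, h1]⟩
  · obtain ⟨_, h2⟩ := hw
    simp only [mem_singleton_iff] at h2
    exact ⟨w.1, by simp [lineMap, Prod.ext_iff, h2]⟩
  · obtain ⟨_, h2⟩ := hw
    simp only [mem_singleton_iff] at h2
    exact ⟨w.1, by simp [lineMap, Prod.ext_iff, h2]⟩

lemma dist_lineMap (e : (ℕ × ℤ × ℤ) × Fin 4) (r : ℝ) (z : ℝ × ℝ) :
    dist (lineMap e r) z = max (dist (lineMap e (zcoord e z)) z) |r - zcoord e z| := by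
  by_cases h : e.2.val ≤ 1
  · have h1 : dist (lineMap e (zcoord e z)) z
        = |(if e.2.val = 0 then (e.1.2.1:ℝ) else (e.1.2.1:ℝ)+1) * hh e.1.1 - z.1| := by
      simp only [lineMap, zcoord, if_pos h, Prod.dist_eq, Real.dist_eq, sub_self, abs_zero]
      exact max_eq_left (abs_nonneg _)
    rw [h1]
    simp only [lineMap, if_pos h, Prod.dist_eq, Real.dist_eq, zcoord]
  · have h1 : dist (lineMap e (zcoord e z)) z
        = |(if e.2.val = 2 then (e.1.2.2:ℝ) else (e.1.2.2:ℝ)+1) * hh e.1.1 - z.2| := by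
      simp only [lineMap, zcoord, if_neg h, Prod.dist_eq, Real.dist_eq, sub_self, abs_zero]
      exact max_eq_right (abs_nonneg _)
    rw [h1]
    simp only [lineMap, if_neg h, Prod.dist_eq, Real.dist_eq, zcoord]
    rw [max_comm]

lemma sphere_hit {K : Set (ℝ × ℝ)} (hK : IsPreconnected K) {z y : ℝ × ℝ} (hz : z ∈ K)
    (hy : y ∈ K) {t : ℝ} (h0 : 0 < t) (hlt : t < dist y z) : ∃ w ∈ K, dist w z = t := by
  by_contra hcon
  push_neg at hcon
  have hU : IsOpen (Metric.ball z t) := Metric.isOpen_ball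
  have hV : IsOpen {w : ℝ × ℝ | t < dist w z} :=
    isOpen_lt continuous_const (by fun_prop)
  have hcover : K ⊆ Metric.ball z t ∪ {w | t < dist w z} := by
    intro w hw
    rcases lt_trichotomy (dist w z) t with h | h | h
    · exact Or.inl (by rwa [Metric.mem_ball])
    · exact absurd h (hcon w hw)
    · exact Or.inr h
  have h1 : (K ∩ Metric.ball z t).Nonempty := ⟨z, hz, by simp [Metric.mem_ball, h0]⟩
  have h2 : (K ∩ {w | t < dist w z}).Nonempty := ⟨y, hy, hlt⟩
  obtain ⟨w, hwK, hw1, hw2⟩ := hK _ _ hU hV hcover h1 h2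
  rw [Metric.mem_ball] at hw1
  exact absurd hw1 (lt_asymm hw2)

lemma sus_aux {X : Set (ℝ × ℝ)} (hXne : X.Nonempty) (hXcl : IsClosed X)
    (hXb : Bornology.IsBounded X) {K : Set (ℝ × ℝ)} (hKXp : K ⊆ Xp X)
    (hKconn : IsPreconnected K) (hKnt : K.Nontrivial) (hKnX : ¬ K ⊆ X) :
    ∃ e : (ℕ × ℤ × ℤ) × Fin 4, 0 < volume (Me K e) := by
  obtain ⟨z, hzK, hzX⟩ := not_subset.1 hKnX
  obtain ⟨u, hu, v, hv, huv⟩ := hKnt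
  have hy : ∃ y ∈ K, y ≠ z := by
    rcases em (u = z) with rfl | h
    · exact ⟨v, hv, fun h => huv h.symm⟩
    · exact ⟨u, hu, h⟩
  obtain ⟨y, hyK, hyz⟩ := hy
  have hdyz : 0 < dist y z := dist_pos.2 hyz
  have hdz : 0 < Metric.infDist z X := (hXcl.notMem_iff_infDist_pos hXne).1 hzX
  obtain ⟨I, hIf, hIq, hIc⟩ := coarse_structure hXne hXcl hXb hzX
  set ρ := min (Metric.infDist z X / 2) (dist y z) / 2 with hρ
  have hρ0 : 0 < ρ := by positivity
  have hρle1 : ρ ≤ dist y z / 2 := by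
    rw [hρ]
    have := min_le_right (Metric.infDist z X / 2) (dist y z)
    linarith
  have hρle2 : ρ ≤ Metric.infDist z X / 4 := by
    rw [hρ]
    have := min_le_left (Metric.infDist z X / 2) (dist y z)
    linarith
  by_contra hcon
  push_neg at hcon
  have hcon' : ∀ e : (ℕ × ℤ × ℤ) × Fin 4, volume (Me K e) = 0 := fun e =>
    le_antisymm (hcon e) (zero_le)
  -- covering of Ioo 0 ρ
  set I4 : Set ((ℕ × ℤ × ℤ) × Fin 4) := {e | e.1 ∈ I} with hI4
  have hI4f : I4.Finite := by
    apply Set.Finite.subset (hIf.prod (Set.finite_univ (α := Fin 4)))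
    rintro ⟨kij, t⟩ h1
    exact ⟨h1, trivial⟩
  have hcover : Ioo (0:ℝ) ρ ⊆
      (⋃ e ∈ I4, {dist (lineMap e (zcoord e z)) z}) ∪
      (⋃ e ∈ I4, ((fun s => zcoord e z + s) ⁻¹' (Me K e)
        ∪ (fun s => zcoord e z - s) ⁻¹' (Me K e))) := by
    intro t ⟨ht0, htρ⟩
    have htd : t < dist y z := lt_of_lt_of_le htρ (by linarith)
    obtain ⟨w, hwK, hwd⟩ := sphere_hit hKconn hzK hyK ht0 htd
    have hwdz : dist w z < Metric.infDist z X / 2 := by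
      rw [hwd]
      exact lt_of_lt_of_le htρ (by linarith)
    obtain ⟨kij, hk1, hk2⟩ := hIc w (hKXp hwK) hwdz
    obtain ⟨tt, htt⟩ := mem_iUnion.1 hk2
    set e : (ℕ × ℤ × ℤ) × Fin 4 := ((kij.1, kij.2.1, kij.2.2), tt) with he
    have heI : e ∈ I4 := by simpa [hI4, he] using hk1
    obtain ⟨r, hr⟩ := mem_edge_lineMap htt
    have hdr : dist (lineMap e r) z = t := by rw [← hr]; exact hwd
    rw [dist_lineMap] at hdr
    rcases max_choice (dist (lineMap e (zcoord e z)) z) |r - zcoord e z| with hmx | hmx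
    · rw [hmx] at hdr
      exact Or.inl (mem_iUnion₂.2 ⟨e, heI, by simp [hdr]⟩)
    · rw [hmx] at hdr
      have : r = zcoord e z + t ∨ r = zcoord e z - t := by
        rcases abs_cases (r - zcoord e z) with ⟨h, _⟩ | ⟨h, _⟩
        · left; rw [h] at hdr; linarith
        · right; rw [h] at hdr; linarith
      refine Or.inr (mem_iUnion₂.2 ⟨e, heI, ?_⟩)
      rcases this with h | h
      · left
        simp only [mem_preimage, Me]
        rw [← h, ← hr]
        exact hwK
      · right
        simp only [mem_preimage, Me]
        rw [← h, ← hr]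
        exact hwK
  have hnull1 : volume (⋃ e ∈ I4, {dist (lineMap e (zcoord e z)) z}) = 0 := by
    apply measure_biUnion_null_iff hI4f.countable |>.2
    intro e _
    exact measure_singleton _
  have hnull2 : volume (⋃ e ∈ I4, ((fun s => zcoord e z + s) ⁻¹' (Me K e)
      ∪ (fun s => zcoord e z - s) ⁻¹' (Me K e))) = 0 := by
    apply measure_biUnion_null_iff hI4f.countable |>.2
    intro e _
    apply measure_union_null
    · rw [measure_preimage_add]
      exact hcon' e
    · have : (fun s : ℝ => zcoord e z - s) = (fun s => zcoord e z + s) ∘ (fun s => -s) := by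
        funext s; simp [sub_eq_add_neg]
      rw [this, preimage_comp, Measure.measure_preimage_neg, measure_preimage_add]
      exact hcon' e
  have : volume (Ioo (0:ℝ) ρ) = 0 :=
    le_antisymm (le_trans (measure_mono hcover)
      (le_trans (measure_union_le _ _) (by rw [hnull1, hnull2]; simp))) (zero_le)
  rw [Real.volume_Ioo] at this
  simp only [ENNReal.ofReal_eq_zero, sub_zero] at this
  linarith

lemma Me_disjoint {K K' : Set (ℝ × ℝ)} (h : Disjoint K K') (e : (ℕ × ℤ × ℤ) × Fin 4) :
    Disjoint (Me K e) (Me K' e) := by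
  rw [Set.disjoint_left] at h ⊢
  intro r hr hr'
  exact h hr hr'

lemma Me_nullMeasurable {K : Set (ℝ × ℝ)} (hK : IsClosed K) (e : (ℕ × ℤ × ℤ) × Fin 4) :
    NullMeasurableSet (Me K e) volume :=
  ((hK.preimage (lineMap_continuous e)).measurableSet).nullMeasurableSet

lemma Xp_suslinian {X : Set (ℝ × ℝ)} (hXne : X.Nonempty) (hXcomp : IsCompact X)
    (hXsus : Suslinian X) : Suslinian (Xp X) := by
  intro 𝒞 h𝒞 hdisj
  classical
  have hXcl := hXcomp.isClosed
  have hXb := hXcomp.isBounded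
  have hsub : 𝒞 ⊆ {K ∈ 𝒞 | K ⊆ X} ∪ {K ∈ 𝒞 | ¬ K ⊆ X} := by
    intro K hK
    by_cases h : K ⊆ X
    · exact Or.inl ⟨hK, h⟩
    · exact Or.inr ⟨hK, h⟩
  apply Set.Countable.mono hsub
  apply Set.Countable.union
  · apply hXsus
    · intro K hK
      obtain ⟨_, h2, h3, h4⟩ := h𝒞 K hK.1
      exact ⟨hK.2, h2, h3, h4⟩
    · exact hdisj.mono (sep_subset _ _)
  · have key : ∀ K ∈ {K ∈ 𝒞 | ¬ K ⊆ X}, ∃ e : (ℕ × ℤ × ℤ) × Fin 4, 0 < volume (Me K e) := by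
      intro K hK
      obtain ⟨h1, h2, h3, h4⟩ := h𝒞 K hK.1
      exact sus_aux hXne hXcl hXb h1 h3.isPreconnected h4 hK.2
    have hsub2 : {K ∈ 𝒞 | ¬ K ⊆ X} ⊆
        ⋃ e : (ℕ × ℤ × ℤ) × Fin 4, {K | K ∈ 𝒞 ∧ 0 < volume (Me K e)} := by
      intro K hK
      obtain ⟨e, he⟩ := key K hK
      exact mem_iUnion.2 ⟨e, hK.1, he⟩
    apply Set.Countable.mono hsub2
    apply Set.countable_iUnion
    intro e
    set As : {K // K ∈ 𝒞} → Set ℝ := fun K => Me K.val e with hAs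
    have hmble : ∀ i, NullMeasurableSet (As i) volume := fun i =>
      Me_nullMeasurable ((h𝒞 i.val i.2).2.1.isClosed) e
    have hdisj2 : Pairwise (Function.onFun (MeasureTheory.AEDisjoint volume) As) := by
      intro i k hik
      have hne : i.val ≠ k.val := fun h => hik (Subtype.ext h)
      exact (Me_disjoint (hdisj i.2 k.2 hne) e).aedisjoint
    have hcnt := MeasureTheory.Measure.countable_meas_pos_of_disjoint_iUnion₀
      (μ := volume) hmble hdisj2
    have himg : {K | K ∈ 𝒞 ∧ 0 < volume (Me K e)} ⊆
        Subtype.val '' {i : {K // K ∈ 𝒞} | 0 < volume (As i)} := by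
      rintro K ⟨hK, hpos⟩
      exact ⟨⟨K, hK⟩, hpos, rfl⟩
    exact Set.Countable.mono himg (hcnt.image _)

end Stmt9

theorem stmt9 (X : Set (ℝ × ℝ))
    (hXne : X.Nonempty) (hXcomp : IsCompact X) (hXconn : IsConnected X)
    (hXsus : Suslinian X) :
    ∃ X' : Set (ℝ × ℝ), X ⊆ X' ∧ X'.Nonempty ∧ IsCompact X' ∧ IsConnected X' ∧
      Suslinian X' ∧ LocallyConnectedSpace X' := by
  exact ⟨Stmt9.Xp X, Stmt9.subset_Xp_left, hXne.mono Stmt9.subset_Xp_left,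
    Stmt9.Xp_compact hXne hXcomp, Stmt9.Xp_connected hXne hXconn.isPreconnected,
    Stmt9.Xp_suslinian hXne hXcomp hXsus,
    Stmt9.Xp_locallyConnected hXne hXcomp.isClosed hXcomp.isBounded⟩
end

section
/- Let X be a plane continuum and suppose X' ⊇ X is a continuum such that X' \ X is contained in a countable union of arcs. If X is Suslinian, then X' is Suslinian. -/
open Set Topology unitInterval



/-- `A` is an arc: a homeomorphic image of `[0,1]` (equivalently, by
compactness, the image of a continuous injection). -/
def IsArc {α : Type*} [TopologicalSpace α] (A : Set α) : Prop :=
  ∃ f : unitInterval → α, Continuous f ∧ Function.Injective f ∧ Set.range f = A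


open Metric in

/-- Boundary bumping (weak form): a nondegenerate continuum has, around any of
its points, a nondegenerate subcontinuum inside the closed ball of radius `r`. -/
lemma exists_nondeg_subcontinuum {α : Type*} [MetricSpace α] {K : Set α}
    (hKc : IsCompact K) (hKconn : IsConnected K) (hKnt : K.Nontrivial)
    {p : α} (hp : p ∈ K) {r : ℝ} (hr : 0 < r) :
    ∃ C : Set α, C ⊆ K ∩ closedBall p r ∧ IsCompact C ∧ IsConnected C ∧ C.Nontrivial := by
  by_cases hKball : K ⊆ closedBall p r
  · exact ⟨K, fun y hy => ⟨hy, hKball hy⟩, hKc, hKconn, hKnt⟩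
  · obtain ⟨q, hqK, hqout⟩ := not_subset.1 hKball
    have hqr : r < dist q p := lt_of_not_ge (fun h => hqout (mem_closedBall.2 h))
    set L : Set α := K ∩ closedBall p r with hL
    have hLc : IsCompact L := hKc.inter_right isClosed_closedBall
    haveI : CompactSpace L := isCompact_iff_compactSpace.1 hLc
    have hpL : p ∈ L := ⟨hp, mem_closedBall_self hr.le⟩
    set x : L := ⟨p, hpL⟩ with hx
    set Bd : Set L := {y : L | dist (y : α) p = r} with hBd
    have hBdc : IsClosed Bd := by
      have : Bd = (fun y : L => dist (y : α) p) ⁻¹' {r} := rfl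
      rw [this]
      exact IsClosed.preimage (by fun_prop) isClosed_singleton
    -- the connected component of x in L meets Bd
    have hmeet : (connectedComponent x ∩ Bd).Nonempty := by
      by_contra hempty
      rw [not_nonempty_iff_eq_empty] at hempty
      have hIII : (Bd ∩ ⋂ s : { s : Set L // IsClopen s ∧ x ∈ s }, (s : Set L)) = ∅ := by
        rw [← connectedComponent_eq_iInter_isClopen x, inter_comm]
        exact hempty
      obtain ⟨t, ht⟩ := hBdc.isCompact.elim_finite_subfamily_closed _
        (fun s : { s : Set L // IsClopen s ∧ x ∈ s } => s.2.1.1) hIII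
      set V : Set L := ⋂ s ∈ t, (s : Set L) with hV
      have hVclopen : IsClopen V := isClopen_biInter_finset (fun s _ => s.2.1)
      have hxV : x ∈ V := mem_iInter₂.2 fun s _ => s.2.2
      have hVBd : V ∩ Bd = ∅ := by
        rw [eq_empty_iff_forall_notMem]
        intro y hy
        rw [eq_empty_iff_forall_notMem] at ht
        exact ht y ⟨hy.2, mem_iInter₂.2 fun s hs => mem_iInter₂.1 hy.1 s hs⟩
      -- translate V to an ambient set
      obtain ⟨O, hOopen, hOV⟩ := isOpen_induced_iff.1 hVclopen.2
      set U : Set α := Subtype.val '' V with hU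
      have hUL : U ⊆ L := by rintro y ⟨z, _, rfl⟩; exact z.2
      have hUc : IsClosed U :=
        ((hVclopen.1.isCompact).image continuous_subtype_val).isClosed
      have hUlt : ∀ y ∈ U, dist y p < r := by
        rintro y hyU
        rcases hyU with ⟨z, hzV, rfl⟩
        rcases lt_or_eq_of_le (mem_closedBall.1 z.2.2) with h | h
        · exact h
        · exfalso
          have hz : (z : L) ∈ V ∩ Bd := ⟨hzV, h⟩
          rw [hVBd] at hz
          exact hz
      set W : Set α := O ∩ ball p r with hW
      have hWopen : IsOpen W := hOopen.inter isOpen_ball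
      have hUW : U = W ∩ K := by
        apply Subset.antisymm
        · rintro y ⟨z, hzV, rfl⟩
          have hyO : (z : α) ∈ O := by
            have : (z : L) ∈ Subtype.val ⁻¹' O := hOV ▸ hzV
            exact this
          exact ⟨⟨hyO, mem_ball.2 (hUlt _ ⟨z, hzV, rfl⟩)⟩, z.2.1⟩
        · rintro y ⟨⟨hyO, hyb⟩, hyK⟩
          have hyL : y ∈ L := ⟨hyK, ball_subset_closedBall hyb⟩
          refine ⟨⟨y, hyL⟩, ?_, rfl⟩
          rw [← hOV]; exact hyO
      -- contradiction with connectedness of K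
      have hcover : K ⊆ U ∪ (K \ W) := by
        intro y hy
        by_cases hyW : y ∈ W
        · exact Or.inl (hUW ▸ ⟨hyW, hy⟩)
        · exact Or.inr ⟨hy, hyW⟩
      have hne1 : (K ∩ U).Nonempty := ⟨p, hp, ⟨x, hxV, rfl⟩⟩
      have hne2 : (K ∩ (K \ W)).Nonempty := by
        refine ⟨q, hqK, hqK, fun hqW => ?_⟩
        exact absurd (mem_ball.1 hqW.2) (not_lt.2 hqr.le)
      obtain ⟨z, _, hzU, hzKW⟩ := isPreconnected_closed_iff.1 hKconn.isPreconnected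
        U (K \ W) hUc (hKc.isClosed.sdiff hWopen) hcover hne1 hne2
      exact hzKW.2 (hUW ▸ hzU).1
    obtain ⟨y, hyC, hyBd⟩ := hmeet
    refine ⟨Subtype.val '' connectedComponent x, ?_, ?_, ?_, ?_⟩
    · rintro z ⟨w, _, rfl⟩; exact w.2
    · exact (isClosed_connectedComponent.isCompact).image continuous_subtype_val
    · exact isConnected_connectedComponent.image _ continuous_subtype_val.continuousOn
    · refine ⟨(y : α), ⟨y, hyC, rfl⟩, p, ⟨x, mem_connectedComponent, rfl⟩, ?_⟩
      intro h
      have hd : dist (y : α) p = r := hyBd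
      rw [h, dist_self] at hd
      exact hr.ne hd

/-- Baire category step: a nondegenerate continuum covered by countably many
closed sets has a nondegenerate subcontinuum inside one of them. -/
lemma exists_arc_piece {C : Set (ℝ × ℝ)} (hCc : IsCompact C) (hCconn : IsConnected C)
    (hCnt : C.Nontrivial) (A : ℕ → Set (ℝ × ℝ)) (hAcl : ∀ n, IsClosed (A n))
    (hCA : C ⊆ ⋃ n, A n) :
    ∃ n, ∃ D, D ⊆ C ∩ A n ∧ IsCompact D ∧ IsConnected D ∧ D.Nontrivial := by
  haveI : Nonempty ↥C := hCconn.nonempty.to_subtype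
  haveI : CompleteSpace ↥C := hCc.isClosed.completeSpace_coe
  have hclosed : ∀ n, IsClosed ((Subtype.val : ↥C → ℝ × ℝ) ⁻¹' A n) := fun n =>
    (hAcl n).preimage continuous_subtype_val
  have huniv : (⋃ n, (Subtype.val : ↥C → ℝ × ℝ) ⁻¹' A n) = univ := by
    ext z
    simp only [mem_iUnion, mem_preimage, mem_univ, iff_true]
    exact mem_iUnion.1 (hCA z.2)
  obtain ⟨n, y, hy⟩ := nonempty_interior_of_iUnion_of_closed hclosed huniv
  obtain ⟨δ, hδ, hball⟩ := Metric.isOpen_iff.1 isOpen_interior y hy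
  have hsub : ∀ z, z ∈ C → dist z (y : ℝ × ℝ) < δ → z ∈ A n := by
    intro z hz hd
    have hm : (⟨z, hz⟩ : ↥C) ∈ Metric.ball y δ := by
      rw [Metric.mem_ball, Subtype.dist_eq]; exact hd
    exact (interior_subset (s := (Subtype.val : ↥C → ℝ × ℝ) ⁻¹' A n)) (hball hm)
  obtain ⟨D, hDsub, hDc, hDconn, hDnt⟩ :=
    exists_nondeg_subcontinuum hCc hCconn hCnt y.2 (half_pos hδ)
  refine ⟨n, D, fun w hw => ⟨(hDsub hw).1, hsub w (hDsub hw).1 ?_⟩, hDc, hDconn, hDnt⟩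
  have h2 := (hDsub hw).2
  rw [Metric.mem_closedBall] at h2
  linarith

/-- A nondegenerate subcontinuum of an arc hits a rational parameter. -/
lemma arc_rat {f : unitInterval → ℝ × ℝ} (hf : Continuous f) (hinj : Function.Injective f)
    {D : Set (ℝ × ℝ)} (hD : D ⊆ range f) (hDc : IsCompact D) (hDconn : IsConnected D)
    (hDnt : D.Nontrivial) :
    ∃ q : ℚ, ∃ t : unitInterval, (t : ℝ) = q ∧ f t ∈ D := by
  have hE : IsConnected (f ⁻¹' D) := hDconn.preimage_of_isClosedMap hinj hf.isClosedMap hD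
  obtain ⟨a, ha, b, hb, hab⟩ := hDnt
  obtain ⟨s, rfl⟩ := hD ha
  obtain ⟨u, rfl⟩ := hD hb
  have hS : IsPreconnected (Subtype.val '' (f ⁻¹' D)) :=
    hE.isPreconnected.image _ continuous_subtype_val.continuousOn
  have hOrd := hS.ordConnected
  have hsS : (s : ℝ) ∈ Subtype.val '' (f ⁻¹' D) := ⟨s, ha, rfl⟩
  have huS : (u : ℝ) ∈ Subtype.val '' (f ⁻¹' D) := ⟨u, hb, rfl⟩
  have hsune : (s : ℝ) ≠ (u : ℝ) := fun h => hab (by rw [Subtype.coe_injective h])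
  rcases hsune.lt_or_gt with h | h
  · obtain ⟨q, hq1, hq2⟩ := exists_rat_btwn h
    obtain ⟨t, htD, htq⟩ := hOrd.out hsS huS ⟨hq1.le, hq2.le⟩
    exact ⟨q, t, htq, htD⟩
  · obtain ⟨q, hq1, hq2⟩ := exists_rat_btwn h
    obtain ⟨t, htD, htq⟩ := hOrd.out huS hsS ⟨hq1.le, hq2.le⟩
    exact ⟨q, t, htq, htD⟩

theorem stmt10 (X X' : Set (ℝ × ℝ))
    (hXcomp : IsCompact X) (hXconn : IsConnected X)
    (hX'comp : IsCompact X') (hX'conn : IsConnected X')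
    (hsub : X ⊆ X')
    (A : ℕ → Set (ℝ × ℝ)) (hA : ∀ n, IsArc (A n))
    (hcover : X' \ X ⊆ ⋃ n, A n)
    (hXsus : Suslinian X) :
    Suslinian X' := by
  intro 𝒞 hmem hdisj
  set 𝒞₀ : Set (Set (ℝ × ℝ)) := {K ∈ 𝒞 | K ⊆ X} with h𝒞₀
  have h0 : 𝒞₀.Countable :=
    hXsus 𝒞₀ (fun K hK => ⟨hK.2, (hmem K hK.1).2⟩) (hdisj.mono (sep_subset _ _))
  choose F hFc hFi hFr using hA
  have hAclosed : ∀ n, IsClosed (A n) := fun n => by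
    rw [← hFr n]; exact (isCompact_range (hFc n)).isClosed
  have key : ∀ K ∈ 𝒞 \ 𝒞₀, ∃ z : ℕ × ℚ, ∃ t : unitInterval,
      (t : ℝ) = (z.2 : ℝ) ∧ F z.1 t ∈ K := by
    rintro K ⟨hK𝒞, hKn⟩
    obtain ⟨hKX', hKc, hKconn, hKnt⟩ := hmem K hK𝒞
    have hnsub : ¬ K ⊆ X := fun h => hKn ⟨hK𝒞, h⟩
    obtain ⟨p, hpK, hpX⟩ := not_subset.1 hnsub
    have hXne : X.Nonempty := hXconn.nonempty
    have hd : 0 < Metric.infDist p X :=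
      (hXcomp.isClosed.notMem_iff_infDist_pos hXne).1 hpX
    have hr : 0 < Metric.infDist p X / 2 := by positivity
    obtain ⟨C, hCsub, hCc, hCconn, hCnt⟩ :=
      exists_nondeg_subcontinuum hKc hKconn hKnt hpK hr
    have hCX : ∀ z ∈ C, z ∉ X := by
      intro z hz hzX
      have h1 : dist z p ≤ Metric.infDist p X / 2 := Metric.mem_closedBall.1 (hCsub hz).2
      have h2 : Metric.infDist p X ≤ dist p z := Metric.infDist_le_dist_of_mem hzX
      rw [dist_comm] at h2
      linarith
    have hCun : C ⊆ ⋃ n, A n := fun z hz => hcover ⟨hKX' (hCsub hz).1, hCX z hz⟩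
    obtain ⟨n, D, hDsub, hDc, hDconn, hDnt⟩ :=
      exists_arc_piece hCc hCconn hCnt A hAclosed hCun
    have hDA : D ⊆ range (F n) := fun w hw => (hFr n) ▸ (hDsub hw).2
    obtain ⟨q, t, htq, htD⟩ := arc_rat (hFc n) (hFi n) hDA hDc hDconn hDnt
    exact ⟨(n, q), t, htq, (hCsub (hDsub htD).1).1⟩
  choose! g hg using key
  have h1 : (𝒞 \ 𝒞₀).Countable := by
    refine (Set.mapsTo_univ g _).countable_of_injOn ?_ Set.countable_univ
    intro K1 hK1 K2 hK2 hgeq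
    by_contra hne
    obtain ⟨t1, ht1q, ht1⟩ := hg K1 hK1
    obtain ⟨t2, ht2q, ht2⟩ := hg K2 hK2
    have ht12 : t1 = t2 := Subtype.coe_injective (show (t1:ℝ) = (t2:ℝ) by rw [ht1q, ht2q, hgeq])
    have hmem12 : F (g K1).1 t1 ∈ K2 := by rw [ht12, hgeq]; exact ht2
    exact Set.disjoint_left.1 (hdisj hK1.1 hK2.1 hne) ht1 hmem12
  exact ((h0.union h1).mono (fun K hK => by
    by_cases h : K ∈ 𝒞₀
    · exact Or.inl h
    · exact Or.inr ⟨hK, h⟩))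
end

section
/- If X is a regular continuum (has a basis of open sets with finite frontiers), then every totally disconnected subset Y ⊆ X is zero-dimensional. -/
open Set Topology

theorem stmt16 {X : Type*} [MetricSpace X] [CompactSpace X] [ConnectedSpace X] [Nonempty X]
    (hreg : ∀ x : X, ∀ U : Set X, IsOpen U → x ∈ U →
      ∃ V : Set X, IsOpen V ∧ x ∈ V ∧ V ⊆ U ∧ (frontier V).Finite)
    (Y : Set X) (hYtd : TotDisconnIn Y) :
    ∀ y ∈ Y, ZeroDimAt Y y := by
  intro y hy V hV hyV
  obtain ⟨W, hWo, hyW, hWV, hFfin⟩ := hreg y V hV hyV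
  have hSfin : (frontier W ∩ Y).Finite := hFfin.inter_of_left Y
  have key : ∀ f : X, ∃ U Fc : Set X, IsOpen U ∧ IsClosed Fc ∧
      (f ∈ frontier W ∩ Y → (U ∩ Y = Fc ∩ Y ∧ y ∈ U ∩ Y ∧ f ∉ U ∩ Y)) := by
    intro f
    by_cases hf : f ∈ frontier W ∩ Y
    · have hne : y ≠ f := by
        rintro rfl
        exact (hWo.frontier_eq ▸ hf.1).2 hyW
      obtain ⟨C, ⟨⟨U, hUo, hCU⟩, ⟨Fc, hFc, hCF⟩⟩, hyC, hfC⟩ := hYtd y hy f hf.2 hne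
      exact ⟨U, Fc, hUo, hFc, fun _ => ⟨hCU ▸ hCF ▸ rfl, hCU ▸ hyC, hCU ▸ hfC⟩⟩
    · exact ⟨univ, univ, isOpen_univ, isClosed_univ, fun h => absurd h hf⟩
  choose U Fc hUo hFco hprop using key
  set S := hSfin.toFinset with hS
  have hmem : ∀ f, f ∈ S ↔ f ∈ frontier W ∩ Y := fun f => hSfin.mem_toFinset
  refine ⟨(W ∩ Y) ∩ ⋂ f ∈ S, (U f ∩ Y), ⟨⟨W ∩ ⋂ f ∈ S, U f,
    hWo.inter (isOpen_biInter_finset fun f _ => hUo f), ?_⟩,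
    ⟨closure W ∩ ⋂ f ∈ S, Fc f,
    isClosed_closure.inter (isClosed_biInter fun f _ => hFco f), ?_⟩⟩,
    ⟨⟨hyW, hy⟩, mem_iInter₂.2 fun f hf => (hprop f ((hmem f).1 hf)).2.1⟩,
    fun x hx => hWV hx.1.1⟩
  · apply Set.eq_of_subset_of_subset
    · rintro x ⟨⟨hxW, hxY⟩, hxU⟩
      exact ⟨⟨hxW, mem_iInter₂.2 fun f hf => (mem_iInter₂.1 hxU f hf).1⟩, hxY⟩
    · rintro x ⟨⟨hxW, hxU⟩, hxY⟩
      exact ⟨⟨hxW, hxY⟩, mem_iInter₂.2 fun f hf => ⟨mem_iInter₂.1 hxU f hf, hxY⟩⟩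
  · apply Set.eq_of_subset_of_subset
    · rintro x ⟨⟨hxW, hxY⟩, hxU⟩
      refine ⟨⟨subset_closure hxW, mem_iInter₂.2 fun f hf => ?_⟩, hxY⟩
      have h1 := (hprop f ((hmem f).1 hf)).1
      exact ((h1 ▸ (mem_iInter₂.1 hxU f hf)) : x ∈ Fc f ∩ Y).1
    · rintro x ⟨⟨hxcl, hxF⟩, hxY⟩
      have hxW : x ∈ W := by
        rcases (closure_eq_self_union_frontier W ▸ hxcl : x ∈ W ∪ frontier W) with h | h
        · exact h
        · exfalso
          have hfS : x ∈ S := (hmem x).2 ⟨h, hxY⟩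
          have h1 := (hprop x ((hmem x).1 hfS)).1
          have h2 := (hprop x ((hmem x).1 hfS)).2.2
          exact h2 (h1 ▸ (⟨mem_iInter₂.1 hxF x hfS, hxY⟩ : x ∈ Fc x ∩ Y))
      refine ⟨⟨hxW, hxY⟩, mem_iInter₂.2 fun f hf => ?_⟩
      have h1 := (hprop f ((hmem f).1 hf)).1
      exact (h1 ▸ (⟨mem_iInter₂.1 hxF f hf, hxY⟩ : x ∈ Fc f ∩ Y) : x ∈ U f ∩ Y)
end
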